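/- arXiv:2011.10497 — 5 statements merged into one kernel-verified Lean document; each statement's English description precedes it below -/
import Mathlib

section
/- Let A, B : ℕ → ℂ, let F, G : ℂ → ℂ, and let R_F, R_G > 0 be such that for every z ∈ ℂ with |z| < R_F the series Σ_{n≥0} A_n z^n converges to F(z), and for every z with |z| < R_G the series Σ_{n≥0} B_n z^n converges to G(z). Let z ∈ ℂ and r > 0 satisfy |z|/R_G < r < R_F. Then the series Σ_{n≥0} A_n B_n z^n converges and Σ_{n≥0} A_n B_n z^n = (1/(2πi)) ∮_{|u|=r} F(u) · G(z/u) · (1/u) du, where the integral is taken over the positively oriented circle of radius r centered at 0. -/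
open Complex MeasureTheory

lemma hadamard_aux_summable (C : ℕ → ℂ) {s t : ℝ} (hs : 0 ≤ s) (hst : s < t)
    (h : Summable fun n : ℕ => C n * (t : ℂ) ^ n) :
    Summable fun n : ℕ => ‖C n‖ * s ^ n := by
  have ht : 0 < t := lt_of_le_of_lt hs hst
  have h0 : Filter.Tendsto (fun n : ℕ => ‖C n * (t : ℂ) ^ n‖) Filter.atTop (nhds 0) := by
    simpa using h.tendsto_atTop_zero.norm
  obtain ⟨M, hM⟩ := h0.bddAbove_range
  have hMle : ∀ n : ℕ, ‖C n * (t : ℂ) ^ n‖ ≤ M := fun n => hM ⟨n, rfl⟩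
  have htC : ‖(t : ℂ)‖ = t := by
    rw [Complex.norm_real, Real.norm_eq_abs, abs_of_pos ht]
  refine Summable.of_nonneg_of_le (fun n => by positivity) (fun n => ?_)
    ((summable_geometric_of_lt_one (r := s / t) (by positivity)
      ((div_lt_one ht).2 hst)).mul_left M)
  have key : ‖C n‖ * s ^ n = ‖C n * (t : ℂ) ^ n‖ * (s / t) ^ n := by
    rw [norm_mul, norm_pow, htC, div_pow]
    field_simp
  rw [key]
  exact mul_le_mul_of_nonneg_right (hMle n) (by positivity)

set_option maxHeartbeats 1000000 in
/-- **Plancherel–Hadamard convolution formula.** If `F` is the sum of the power series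
`Σ Aₙ zⁿ` on `|z| < R_F` and `G` is the sum of `Σ Bₙ zⁿ` on `|z| < R_G`, then for
`|z|/R_G < r < R_F` the Hadamard product series `Σ Aₙ Bₙ zⁿ` converges to
`(1/(2πi)) ∮_{|u|=r} F(u) G(z/u) du/u`. -/
theorem hadamard_convolution_formula
    (A B : ℕ → ℂ) (F G : ℂ → ℂ) (R_F R_G : ℝ) (hRF : 0 < R_F) (hRG : 0 < R_G)
    (hF : ∀ w : ℂ, ‖w‖ < R_F → HasSum (fun n : ℕ => A n * w ^ n) (F w))
    (hG : ∀ w : ℂ, ‖w‖ < R_G → HasSum (fun n : ℕ => B n * w ^ n) (G w))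
    (z : ℂ) (r : ℝ) (hr₁ : ‖z‖ / R_G < r) (hr₂ : r < R_F) :
    HasSum (fun n : ℕ => A n * B n * z ^ n)
      ((2 * Real.pi * Complex.I)⁻¹ * ∮ u in C(0, r), F u * G (z / u) / u) := by
  have hr0 : 0 < r := lt_of_le_of_lt (div_nonneg (norm_nonneg z) hRG.le) hr₁
  have hrne : r ≠ 0 := hr0.ne'
  have hsG : ‖z‖ / r < R_G := by
    rw [div_lt_iff₀ hr0]
    have := (div_lt_iff₀ hRG).1 hr₁
    linarith [this]
  -- summability of coefficient norms
  have hA : Summable fun n : ℕ => ‖A n‖ * r ^ n := by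
    have ht1 : r < (r + R_F) / 2 := by linarith
    have ht2 : (r + R_F) / 2 < R_F := by linarith
    refine hadamard_aux_summable A hr0.le ht1 (hF (((r + R_F) / 2 : ℝ) : ℂ) ?_).summable
    rw [Complex.norm_real, Real.norm_eq_abs, abs_of_pos (by linarith)]
    exact ht2
  have hB : Summable fun m : ℕ => ‖B m‖ * (‖z‖ / r) ^ m := by
    set s := ‖z‖ / r with hs
    have hs0 : 0 ≤ s := div_nonneg (norm_nonneg z) hr0.le
    have ht1 : s < (s + R_G) / 2 := by linarith [hsG]
    have ht2 : (s + R_G) / 2 < R_G := by linarith [hsG]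
    refine hadamard_aux_summable B hs0 ht1 (hG (((s + R_G) / 2 : ℝ) : ℂ) ?_).summable
    rw [Complex.norm_real, Real.norm_eq_abs, abs_of_pos (by linarith)]
    exact ht2
  set T : ℕ × ℕ → ℂ → ℂ := fun nm u =>
    A nm.1 * B nm.2 * z ^ nm.2 * u ^ ((nm.1 : ℤ) - nm.2 - 1) with hT
  -- pointwise Hadamard expansion on the circle
  have key : ∀ u : ℂ, ‖u‖ = r →
      HasSum (fun nm : ℕ × ℕ => T nm u) (F u * G (z / u) / u) := by
    intro u hu
    have hu0 : u ≠ 0 := by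
      intro h
      rw [h] at hu; simp at hu; exact hrne hu.symm
    have h1 : HasSum (fun n : ℕ => A n * u ^ n) (F u) := hF u (by rw [hu]; exact hr₂)
    have h2 : HasSum (fun m : ℕ => B m * (z / u) ^ m) (G (z / u)) := by
      apply hG
      rw [norm_div, hu]; exact hsG
    have hs1 : Summable fun n : ℕ => ‖A n * u ^ n‖ := by
      have : (fun n : ℕ => ‖A n * u ^ n‖) = fun n => ‖A n‖ * r ^ n := by
        funext n
        rw [norm_mul, norm_pow, show ‖u‖ = r from by rw [hu]]
      rw [this]; exact hA
    have hs2 : Summable fun m : ℕ => ‖B m * (z / u) ^ m‖ := by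
      have : (fun m : ℕ => ‖B m * (z / u) ^ m‖)
          = fun m => ‖B m‖ * (‖z‖ / r) ^ m := by
        funext m
        rw [norm_mul, norm_pow,
          show ‖z / u‖ = ‖z‖ / r from by rw [norm_div, hu]]
      rw [this]; exact hB
    have hsum := summable_mul_of_summable_norm hs1 hs2
    have hprod := (h1.mul h2 hsum).div_const u
    have hfun : (fun nm : ℕ × ℕ => T nm u)
        = fun nm : ℕ × ℕ => A nm.1 * u ^ nm.1 * (B nm.2 * (z / u) ^ nm.2) / u := by
      funext nm
      obtain ⟨n, m⟩ := nm
      have hz : u ^ ((n : ℤ) - m - 1) = u ^ n / u ^ m / u := by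
        rw [zpow_sub₀ hu0, zpow_sub₀ hu0, zpow_one, zpow_natCast, zpow_natCast]
      simp only [hT, hz, div_pow]
      field_simp
    rw [hfun]
    exact hprod
  -- termwise circle integration
  have main : HasSum (fun nm : ℕ × ℕ => ∮ u in C(0, r), T nm u)
      (∮ u in C(0, r), F u * G (z / u) / u) := by
    simp only [circleIntegral]
    have hcne : ∀ θ : ℝ, circleMap 0 r θ ≠ 0 := fun θ => by
      intro h
      have := norm_circleMap_zero r θ
      rw [h] at this; simp [abs_of_pos hr0] at this; exact hrne this.symm
    apply intervalIntegral.hasSum_integral_of_dominated_convergence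
      (bound := fun nm _ => (‖A nm.1‖ * r ^ nm.1) * (‖B nm.2‖ * (‖z‖ / r) ^ nm.2))
    · intro nm
      apply Continuous.aestronglyMeasurable
      have hc : Continuous (circleMap 0 r) := continuous_circleMap 0 r
      have hder : Continuous (fun θ => deriv (circleMap 0 r) θ) := by
        simp only [deriv_circleMap]
        exact (continuous_circleMap 0 r).mul continuous_const
      exact hder.smul (continuous_const.mul
        (hc.zpow₀ ((nm.1 : ℤ) - nm.2 - 1) (fun θ => Or.inl (hcne θ))))
    · intro nm
      filter_upwards with θ _
      have hnorm : ‖deriv (circleMap 0 r) θ‖ = r := by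
        rw [deriv_circleMap, norm_mul,
          norm_circleMap_zero, Complex.norm_I, abs_of_pos hr0, mul_one]
      rw [norm_smul, hnorm]
      have hcm : ‖circleMap 0 r θ‖ = r := by
        rw [norm_circleMap_zero, abs_of_pos hr0]
      have : ‖T nm (circleMap 0 r θ)‖
          = ‖A nm.1‖ * ‖B nm.2‖ * ‖z‖ ^ nm.2 * r ^ ((nm.1 : ℤ) - nm.2 - 1) := by
        simp only [hT]
        rw [norm_mul, norm_mul, norm_mul, norm_pow, norm_zpow, hcm]
      rw [this]
      have hzp : (r : ℝ) ^ ((nm.1 : ℤ) - nm.2 - 1) = r ^ nm.1 / r ^ nm.2 / r := by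
        rw [zpow_sub₀ hrne, zpow_sub₀ hrne, zpow_one, zpow_natCast, zpow_natCast]
      rw [hzp, div_pow]
      apply le_of_eq
      field_simp
    · filter_upwards with θ _
      exact hA.mul_of_nonneg hB (fun n => by positivity) (fun m => by positivity)
    · exact intervalIntegrable_const
    · filter_upwards with θ _
      exact (key (circleMap 0 r θ) (by rw [norm_circleMap_zero, abs_of_pos hr0])).const_smul _
  -- compute each term integral
  have hTint : ∀ nm : ℕ × ℕ, (∮ u in C(0, r), T nm u)
      = if nm.1 = nm.2 then (2 * Real.pi * Complex.I) * (A nm.1 * B nm.1 * z ^ nm.1) else 0 := by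
    rintro ⟨n, m⟩
    simp only [hT]
    rw [circleIntegral.integral_const_mul]
    by_cases h : n = m
    · subst h
      rw [if_pos rfl]
      have : ((n : ℤ) - n - 1) = -1 := by ring
      rw [this]
      have h1 : (∮ u in C(0, r), u ^ (-1 : ℤ)) = 2 * Real.pi * Complex.I := by
        have := circleIntegral.integral_sub_inv_of_mem_ball
          (c := (0 : ℂ)) (w := (0 : ℂ)) (R := r) (by simpa using hr0)
        simpa [zpow_neg_one] using this
      rw [h1]; ring
    · rw [if_neg h]
      have hne : ((n : ℤ) - m - 1) ≠ -1 := by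
        intro hc
        apply h
        omega
      have := circleIntegral.integral_sub_zpow_of_ne hne 0 0 r
      simp only [sub_zero] at this
      rw [this, mul_zero]
  -- extract the diagonal
  have hdiag : HasSum (fun n : ℕ => (2 * Real.pi * Complex.I) * (A n * B n * z ^ n))
      (∮ u in C(0, r), F u * G (z / u) / u) := by
    have hmain' : HasSum (fun nm : ℕ × ℕ =>
        if nm.1 = nm.2 then (2 * Real.pi * Complex.I) * (A nm.1 * B nm.1 * z ^ nm.1) else 0)
        (∮ u in C(0, r), F u * G (z / u) / u) := by
      have := main
      rwa [show (fun nm : ℕ × ℕ => ∮ u in C(0, r), T nm u) = (fun nm : ℕ × ℕ =>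
        if nm.1 = nm.2 then (2 * Real.pi * Complex.I) * (A nm.1 * B nm.1 * z ^ nm.1) else 0)
        from funext hTint] at this
    have hinj : Function.Injective (fun n : ℕ => ((n, n) : ℕ × ℕ)) :=
      fun a b h => congrArg Prod.fst h
    have h0 : ∀ nm : ℕ × ℕ, nm ∉ Set.range (fun n : ℕ => ((n, n) : ℕ × ℕ)) →
        (if nm.1 = nm.2 then (2 * Real.pi * Complex.I) * (A nm.1 * B nm.1 * z ^ nm.1) else 0)
          = 0 := by
      rintro ⟨n, m⟩ hnm
      rw [if_neg]
      intro h
      exact hnm ⟨n, by simp [show n = m from h]⟩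
    have := (Function.Injective.hasSum_iff hinj h0).2 hmain'
    simpa [Function.comp_def] using this
  have hfe : (fun n : ℕ => A n * B n * z ^ n)
      = fun n : ℕ => (2 * Real.pi * Complex.I : ℂ)⁻¹
        * ((2 * Real.pi * Complex.I) * (A n * B n * z ^ n)) := by
    funext n
    rw [inv_mul_cancel_left₀ Complex.two_pi_I_ne_zero]
  rw [hfe]
  exact hdiag.mul_left _
end

section
/- For every real z with 0 ≤ z < 1: (2/π) ∫_0^1 du/√((1−u²)(1−z·u²)) = Σ_{n≥0} ((2n−1)!!/(2n)!!)² zⁿ. Equivalently, the complete elliptic integral ∫_0^1 du/√((1−u²)(1−z u²)) equals (π/2) times the Hadamard product of the series of (1−z)^{−1/2} with itself. -/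
open Nat Real

open Finset MeasureTheory Set

section EllAux

variable {z : ℝ}

noncomputable def ell (n : ℕ) : ℝ := ∏ i ∈ Finset.range n, (2 * i + 1) / (2 * i + 2)

lemma ell_zero : ell 0 = 1 := by simp [ell]

lemma ell_succ (n : ℕ) : ell (n + 1) = ell n * ((2 * n + 1) / (2 * n + 2)) :=
  Finset.prod_range_succ (fun i => (2 * (i : ℝ) + 1) / (2 * i + 2)) n

lemma ell_pos (n : ℕ) : 0 < ell n := by
  apply Finset.prod_pos; intro i _; positivity

lemma ell_le_one (n : ℕ) : ell n ≤ 1 := by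
  apply Finset.prod_le_one
  · intro i _; positivity
  · intro i _
    rw [div_le_one (by positivity)]
    linarith

lemma ell_rec (n : ℕ) : (2 * (n : ℝ) + 2) * ell (n + 1) = (2 * n + 1) * ell n := by
  rw [ell_succ]
  have h : (2 * (n : ℝ) + 2) ≠ 0 := by positivity
  field_simp

lemma ell_refl (m : ℕ) :
    ∑ k ∈ range (m + 1), (2 * (k : ℝ)) * (ell k * ell (m - k)) =
      (m : ℝ) * ∑ k ∈ range (m + 1), ell k * ell (m - k) := by
  have h := Finset.sum_range_reflect (fun k => (2 * (k : ℝ)) * (ell k * ell (m - k))) (m + 1)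
  simp only [Nat.add_sub_cancel] at h
  have key : (∑ k ∈ range (m + 1), (2 * (k : ℝ)) * (ell k * ell (m - k)))
      + (∑ j ∈ range (m + 1), (2 * ((m - j : ℕ) : ℝ)) * (ell (m - j) * ell (m - (m - j))))
      = 2 * (m : ℝ) * ∑ k ∈ range (m + 1), ell k * ell (m - k) := by
    rw [← Finset.sum_add_distrib, Finset.mul_sum]
    apply Finset.sum_congr rfl
    intro k hk
    have hk' : k ≤ m := by have := Finset.mem_range.mp hk; omega
    rw [Nat.sub_sub_self hk', Nat.cast_sub hk']
    ring
  rw [h] at key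
  linarith

lemma ell_conv (n : ℕ) : ∑ k ∈ range (n + 1), ell k * ell (n - k) = 1 := by
  induction n with
  | zero => simp [ell_zero]
  | succ n ih =>
    have hA : ∑ k ∈ range (n + 2), (2 * (k : ℝ)) * (ell k * ell (n + 1 - k)) =
        ((n : ℝ) + 1) * ∑ k ∈ range (n + 2), ell k * ell (n + 1 - k) := by
      have := ell_refl (n + 1)
      push_cast at this
      simpa using this
    have hB : ∑ k ∈ range (n + 2), (2 * (k : ℝ)) * (ell k * ell (n + 1 - k)) =
        ((n : ℝ) + 1) * 1 := by
      rw [Finset.sum_range_succ' (fun k => (2 * (k : ℝ)) * (ell k * ell (n + 1 - k))) (n + 1)]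
      have e1 : ∀ i ∈ range (n + 1),
          (2 * (((i : ℕ) + 1 : ℕ) : ℝ)) * (ell (i + 1) * ell (n + 1 - (i + 1))) =
          (2 * (i : ℝ)) * (ell i * ell (n - i)) + ell i * ell (n - i) := by
        intro i _
        have hr := ell_rec i
        have hidx : n + 1 - (i + 1) = n - i := by omega
        rw [hidx]
        have h2 : (2 * ((i : ℝ) + 1)) * ell (i + 1) = (2 * (i : ℝ) + 1) * ell i := by
          linarith [hr]
        push_cast
        calc (2 * ((i : ℝ) + 1)) * (ell (i + 1) * ell (n - i))
            = ((2 * ((i : ℝ) + 1)) * ell (i + 1)) * ell (n - i) := by ring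
          _ = ((2 * (i : ℝ) + 1) * ell i) * ell (n - i) := by rw [h2]
          _ = (2 * (i : ℝ)) * (ell i * ell (n - i)) + ell i * ell (n - i) := by ring
      rw [Finset.sum_congr rfl e1, Finset.sum_add_distrib, ell_refl n, ih]
      push_cast
      ring
    rw [hB] at hA
    have hn1 : ((n : ℝ) + 1) ≠ 0 := by positivity
    exact (mul_left_cancel₀ hn1 hA).symm

lemma ell_hasSum {x : ℝ} (hx0 : 0 ≤ x) (hx1 : x < 1) :
    HasSum (fun n : ℕ => ell n * x ^ n) (1 / Real.sqrt (1 - x)) := by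
  have hnorm : Summable fun n : ℕ => ‖ell n * x ^ n‖ := by
    apply Summable.of_nonneg_of_le (fun n => norm_nonneg _) (fun n => ?_)
      (summable_geometric_of_lt_one hx0 hx1)
    rw [Real.norm_eq_abs, abs_of_nonneg (mul_nonneg (ell_pos n).le (pow_nonneg hx0 n))]
    calc ell n * x ^ n ≤ 1 * x ^ n :=
          mul_le_mul_of_nonneg_right (ell_le_one n) (by positivity)
      _ = x ^ n := one_mul _
  have hsummable : Summable fun n : ℕ => ell n * x ^ n := hnorm.of_norm
  set T := ∑' n : ℕ, ell n * x ^ n with hT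
  have hprod := hasSum_sum_range_mul_of_summable_norm hnorm hnorm
  have inner : ∀ n : ℕ,
      ∑ k ∈ range (n + 1), (ell k * x ^ k) * (ell (n - k) * x ^ (n - k)) = x ^ n := by
    intro n
    have e : ∀ k ∈ range (n + 1),
        (ell k * x ^ k) * (ell (n - k) * x ^ (n - k)) = (ell k * ell (n - k)) * x ^ n := by
      intro k hk
      have hk' : k ≤ n := by have := Finset.mem_range.mp hk; omega
      calc (ell k * x ^ k) * (ell (n - k) * x ^ (n - k))
          = (ell k * ell (n - k)) * (x ^ k * x ^ (n - k)) := by ring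
        _ = (ell k * ell (n - k)) * x ^ n := by
            rw [← pow_add, show k + (n - k) = n from by omega]
    rw [Finset.sum_congr rfl e, ← Finset.sum_mul, ell_conv, one_mul]
  have hgeom : HasSum (fun n : ℕ => x ^ n) (T * T) := by
    simpa only [inner] using hprod
  have hTT : T * T = (1 - x)⁻¹ := hgeom.unique (hasSum_geometric_of_lt_one hx0 hx1)
  have hT0 : 0 ≤ T := tsum_nonneg (fun n => mul_nonneg (ell_pos n).le (pow_nonneg hx0 n))
  have hTval : T = 1 / Real.sqrt (1 - x) := by
    rw [← Real.sqrt_mul_self hT0, hTT, one_div, ← Real.sqrt_inv]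
  exact hTval ▸ hsummable.hasSum

lemma ell_doubleFactorial (n : ℕ) :
    (((2 * n - 1)‼ : ℕ) : ℝ) / (((2 * n)‼ : ℕ) : ℝ) = ell n := by
  induction n with
  | zero => simp [ell_zero]
  | succ n ih =>
    have h1 : 2 * (n + 1) - 1 = 2 * n - 1 + 2 ∨ n = 0 := by omega
    have e1 : (2 * (n + 1) - 1)‼ = (2 * n + 1) * (2 * n - 1)‼ := by
      rcases Nat.eq_zero_or_pos n with hn | hn
      · subst hn; simp [Nat.doubleFactorial]
      · have : 2 * (n + 1) - 1 = (2 * n - 1) + 2 := by omega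
        rw [this, Nat.doubleFactorial_add_two]
        congr 1
        omega
    have e2 : (2 * (n + 1))‼ = (2 * n + 2) * (2 * n)‼ := by
      have : 2 * (n + 1) = 2 * n + 2 := by omega
      rw [this, Nat.doubleFactorial_add_two]
    rw [e1, e2, ell_succ, ← ih]
    have hd : ((2 * n)‼ : ℝ) ≠ 0 := by positivity
    push_cast
    field_simp

lemma wallis (n : ℕ) :
    (∫ θ in (0:ℝ)..(π / 2), Real.sin θ ^ (2 * n)) = ell n * (π / 2) := by
  induction n with
  | zero => simp [ell_zero]
  | succ n ih =>
    have h : 2 * (n + 1) = 2 * n + 2 := by omega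
    rw [h, integral_sin_pow (2 * n)]
    rw [Real.sin_zero, Real.cos_pi_div_two, ih, ell_succ]
    push_cast
    ring_nf

lemma hden (h0 : 0 ≤ z) (h1 : z < 1) (θ : ℝ) : 0 < 1 - z * Real.sin θ ^ 2 := by
  nlinarith [Real.sin_sq_le_one θ, sq_nonneg (Real.sin θ)]

lemma g_nonneg (z u : ℝ) : 0 ≤ 1 / Real.sqrt ((1 - u ^ 2) * (1 - z * u ^ 2)) := by positivity

lemma g_integrable (h0 : 0 ≤ z) (h1 : z < 1) :
    IntegrableOn (fun u : ℝ => 1 / Real.sqrt ((1 - u ^ 2) * (1 - z * u ^ 2))) (Icc 0 1) := by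
  have harc : IntegrableOn (fun u : ℝ => 1 / Real.sqrt (1 - u ^ 2)) (Ioc (0:ℝ) 1) := by
    apply intervalIntegral.integrableOn_deriv_of_nonneg (g := Real.arcsin)
      (Real.continuous_arcsin.continuousOn)
    · intro x hx
      exact Real.hasDerivAt_arcsin (by nlinarith [hx.1]) (ne_of_lt hx.2)
    · intro x hx
      positivity
  have hbound : IntegrableOn
      (fun u : ℝ => (Real.sqrt (1 - z))⁻¹ * (1 / Real.sqrt (1 - u ^ 2))) (Ioc (0:ℝ) 1) :=
    harc.const_mul _
  have hmeas : AEStronglyMeasurable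
      (fun u : ℝ => 1 / Real.sqrt ((1 - u ^ 2) * (1 - z * u ^ 2)))
      (volume.restrict (Ioc (0:ℝ) 1)) := by
    apply Measurable.aestronglyMeasurable
    apply Measurable.div measurable_const
    exact (Real.continuous_sqrt.measurable).comp (by fun_prop)
  rw [integrableOn_Icc_iff_integrableOn_Ioc]
  apply hbound.mono' hmeas
  rw [ae_restrict_iff' measurableSet_Ioc]
  filter_upwards with u hu
  have hz : (0:ℝ) < 1 - z := by linarith
  rw [Real.norm_eq_abs, abs_of_nonneg (g_nonneg z u)]
  rcases eq_or_lt_of_le hu.2 with h | h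
  · subst h
    norm_num
  · have h1u : (0:ℝ) < 1 - u ^ 2 := by nlinarith [hu.1]
    have hle : Real.sqrt ((1 - u ^ 2) * (1 - z)) ≤ Real.sqrt ((1 - u ^ 2) * (1 - z * u ^ 2)) := by
      apply Real.sqrt_le_sqrt
      have hu2 : u ^ 2 ≤ 1 := by nlinarith [hu.1.le]
      have hzz : z * u ^ 2 ≤ z := by nlinarith [sq_nonneg u]
      exact mul_le_mul_of_nonneg_left (by linarith) h1u.le
    have hpos : 0 < Real.sqrt ((1 - u ^ 2) * (1 - z)) := Real.sqrt_pos.2 (by positivity)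
    calc 1 / Real.sqrt ((1 - u ^ 2) * (1 - z * u ^ 2))
        ≤ 1 / Real.sqrt ((1 - u ^ 2) * (1 - z)) := one_div_le_one_div_of_le hpos hle
      _ = (Real.sqrt (1 - z))⁻¹ * (1 / Real.sqrt (1 - u ^ 2)) := by
          rw [Real.sqrt_mul h1u.le, one_div, mul_inv, one_div]
          ring

-- pointwise identity for 0 ≤ x < π/2
lemma ptwise (h0 : 0 ≤ z) (h1 : z < 1) {x : ℝ} (hx0 : 0 ≤ x) (hx1 : x < π / 2) :
    Real.cos x • (1 / Real.sqrt ((1 - Real.sin x ^ 2) * (1 - z * Real.sin x ^ 2))) =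
      1 / Real.sqrt (1 - z * Real.sin x ^ 2) := by
  have hcos : 0 < Real.cos x :=
    Real.cos_pos_of_mem_Ioo ⟨by linarith [Real.pi_pos], hx1⟩
  have hd := hden h0 h1 x
  rw [smul_eq_mul, ← Real.cos_sq', Real.sqrt_mul (sq_nonneg _), Real.sqrt_sq hcos.le]
  have hs : Real.sqrt (1 - z * Real.sin x ^ 2) ≠ 0 := (Real.sqrt_pos.2 hd).ne'
  field_simp

lemma h_continuous (h0 : 0 ≤ z) (h1 : z < 1) :
    Continuous (fun θ : ℝ => 1 / Real.sqrt (1 - z * Real.sin θ ^ 2)) := by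
  apply Continuous.div continuous_const
  · exact Real.continuous_sqrt.comp (by fun_prop)
  · intro θ
    exact (Real.sqrt_pos.2 (hden h0 h1 θ)).ne'

lemma ae_ne_pi_div_two : ∀ᵐ x : ℝ, x ≠ π / 2 := by
  rw [ae_iff]
  have : {x : ℝ | ¬x ≠ π / 2} = {π / 2} := by
    ext x; simp
  rw [this]
  exact Real.volume_singleton

lemma substitution (h0 : 0 ≤ z) (h1 : z < 1) :
    (∫ u in (0:ℝ)..1, 1 / Real.sqrt ((1 - u ^ 2) * (1 - z * u ^ 2))) =
      ∫ x in (0:ℝ)..(π / 2), 1 / Real.sqrt (1 - z * Real.sin x ^ 2) := by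
  set g : ℝ → ℝ := fun u => 1 / Real.sqrt ((1 - u ^ 2) * (1 - z * u ^ 2)) with hg
  have hpi2 : (0:ℝ) ≤ π / 2 := by linarith [Real.pi_pos]
  have hmin : min (0:ℝ) (π / 2) = 0 := min_eq_left hpi2
  have hmax : max (0:ℝ) (π / 2) = π / 2 := max_eq_right hpi2
  have huIcc : Set.uIcc (0:ℝ) (π / 2) = Icc (0:ℝ) (π / 2) := uIcc_of_le hpi2
  -- a.e. equality on the restricted measure
  have haeeq : (fun x => Real.cos x • g (Real.sin x)) =ᵐ[volume.restrict (Icc (0:ℝ) (π / 2))]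
      (fun θ => 1 / Real.sqrt (1 - z * Real.sin θ ^ 2)) := by
    filter_upwards [ae_restrict_of_ae ae_ne_pi_div_two, ae_restrict_mem measurableSet_Icc]
      with x hxne hxmem
    exact ptwise h0 h1 hxmem.1 (lt_of_le_of_ne hxmem.2 hxne)
  have hInt_h : IntegrableOn (fun θ : ℝ => 1 / Real.sqrt (1 - z * Real.sin θ ^ 2))
      (Icc (0:ℝ) (π / 2)) := (h_continuous h0 h1).integrableOn_Icc
  have hg2 : IntegrableOn (fun x => Real.cos x • (g ∘ Real.sin) x) (Set.uIcc (0:ℝ) (π / 2)) := by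
    rw [huIcc]
    exact hInt_h.congr haeeq.symm
  have himg1 : ∀ θ ∈ Icc (0:ℝ) (π / 2), Real.sin θ ∈ Icc (0:ℝ) 1 := by
    intro θ hθ
    exact ⟨Real.sin_nonneg_of_nonneg_of_le_pi hθ.1 (by linarith [Real.pi_pos, hθ.2]),
      Real.sin_le_one θ⟩
  have hg1 : IntegrableOn g (Real.sin '' Set.uIcc (0:ℝ) (π / 2)) := by
    apply (g_integrable h0 h1).mono_set
    rw [huIcc]
    rintro y ⟨θ, hθ, rfl⟩
    exact himg1 θ hθ
  have hgcont : ContinuousOn g (Real.sin '' Ioo (min (0:ℝ) (π/2)) (max (0:ℝ) (π/2))) := by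
    rw [hmin, hmax]
    have himg : Real.sin '' Ioo (0:ℝ) (π / 2) ⊆ Ioo (0:ℝ) 1 := by
      rintro y ⟨θ, hθ, rfl⟩
      constructor
      · exact Real.sin_pos_of_pos_of_lt_pi hθ.1 (by linarith [Real.pi_pos, hθ.2])
      · have := Real.sin_lt_sin_of_lt_of_le_pi_div_two (x := θ) (y := π / 2)
          (by linarith [hθ.1, Real.pi_pos]) le_rfl hθ.2
        simpa using this
    apply ContinuousOn.mono _ himg
    apply ContinuousOn.div continuousOn_const
    · exact (Real.continuous_sqrt.comp (by fun_prop)).continuousOn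
    · intro u hu
      apply (Real.sqrt_pos.2 _).ne'
      have h1u : 0 < 1 - u ^ 2 := by nlinarith [hu.1, hu.2]
      have h2u : 0 < 1 - z * u ^ 2 := by nlinarith [hu.1.le, hu.2, sq_nonneg u]
      positivity
  have hsub := intervalIntegral.integral_comp_smul_deriv''' (a := (0:ℝ)) (b := π / 2)
    (f := Real.sin) (f' := Real.cos) (g := g)
    (Real.continuous_sin.continuousOn)
    (fun x _ => (Real.hasDerivAt_sin x).hasDerivWithinAt)
    hgcont hg1 (by exact hg2)
  rw [Real.sin_zero, Real.sin_pi_div_two] at hsub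
  rw [← hsub]
  apply intervalIntegral.integral_congr_ae
  have huIoc : Set.uIoc (0:ℝ) (π / 2) = Set.Ioc (0:ℝ) (π / 2) := Set.uIoc_of_le hpi2
  filter_upwards [ae_ne_pi_div_two] with x hxne hxmem
  rw [huIoc] at hxmem
  have := ptwise h0 h1 (z := z) hxmem.1.le (lt_of_le_of_ne hxmem.2 hxne)
  simpa [Function.comp, hg] using this

end EllAux

/-- The complete elliptic integral as the Hadamard square of the binomial series:
for `0 ≤ z < 1`,
`(2/π) ∫_0^1 du/√((1−u²)(1−z u²)) = Σ_{n≥0} ((2n−1)‼/(2n)‼)² zⁿ`. -/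
theorem elliptic_integral_hadamard_square (z : ℝ) (h0 : 0 ≤ z) (h1 : z < 1) :
    HasSum (fun n : ℕ => (((2 * n - 1)‼ : ℝ) / ((2 * n)‼ : ℝ)) ^ 2 * z ^ n)
      (2 / Real.pi * ∫ u in (0:ℝ)..1, 1 / Real.sqrt ((1 - u ^ 2) * (1 - z * u ^ 2))) := by
  rw [substitution h0 h1]
  set F : ℕ → C(ℝ, ℝ) := fun n =>
    ⟨fun θ => ell n * z ^ n * Real.sin θ ^ (2 * n), by fun_prop⟩ with hF
  have hFnorm : Summable fun n : ℕ =>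
      ‖(F n).restrict (⟨uIcc (0:ℝ) (π / 2), isCompact_uIcc⟩ : TopologicalSpace.Compacts ℝ)‖ := by
    apply Summable.of_nonneg_of_le (fun n => norm_nonneg _) (fun n => ?_)
      (summable_geometric_of_lt_one h0 h1)
    apply (ContinuousMap.norm_le _ (pow_nonneg h0 n)).mpr
    rintro ⟨x, -⟩
    have hs0 : 0 ≤ Real.sin x ^ (2 * n) := by rw [pow_mul]; positivity
    have hs1 : Real.sin x ^ (2 * n) ≤ 1 := by
      rw [pow_mul]; exact pow_le_one₀ (sq_nonneg _) (Real.sin_sq_le_one x)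
    have hval : ‖(F n) x‖ = ell n * z ^ n * Real.sin x ^ (2 * n) := by
      have hFx : (F n) x = ell n * z ^ n * Real.sin x ^ (2 * n) := rfl
      rw [Real.norm_eq_abs, hFx, abs_of_nonneg
        (mul_nonneg (mul_nonneg (ell_pos n).le (pow_nonneg h0 n)) hs0)]
    rw [ContinuousMap.restrict_apply, hval]
    calc ell n * z ^ n * Real.sin x ^ (2 * n) ≤ ell n * z ^ n * 1 := by
          apply mul_le_mul_of_nonneg_left hs1
          exact mul_nonneg (ell_pos n).le (pow_nonneg h0 n)
      _ = ell n * z ^ n := mul_one _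
      _ ≤ 1 * z ^ n := mul_le_mul_of_nonneg_right (ell_le_one n) (pow_nonneg h0 n)
      _ = z ^ n := one_mul _
  have hkey := intervalIntegral.hasSum_intervalIntegral_of_summable_norm
    (a := (0:ℝ)) (b := π / 2) hFnorm
  have htsum : ∀ x : ℝ, (∑' n : ℕ, (F n) x) = 1 / Real.sqrt (1 - z * Real.sin x ^ 2) := by
    intro x
    have hx0 : 0 ≤ z * Real.sin x ^ 2 := by positivity
    have hx1 : z * Real.sin x ^ 2 < 1 := by
      nlinarith [Real.sin_sq_le_one x, sq_nonneg (Real.sin x)]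
    have hb := ell_hasSum hx0 hx1
    have heq : (fun n : ℕ => ell n * (z * Real.sin x ^ 2) ^ n) = fun n : ℕ => (F n) x := by
      funext n
      show ell n * (z * Real.sin x ^ 2) ^ n = ell n * z ^ n * Real.sin x ^ (2 * n)
      rw [mul_pow, pow_mul, mul_assoc]
    rw [heq] at hb
    exact hb.tsum_eq
  have hint : ∀ n : ℕ, (∫ x in (0:ℝ)..(π / 2), (F n) x) = ell n * z ^ n * (ell n * (π / 2)) := by
    intro n
    show (∫ x in (0:ℝ)..(π / 2), ell n * z ^ n * Real.sin x ^ (2 * n)) = _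
    rw [intervalIntegral.integral_const_mul, wallis]
  simp only [hint, htsum] at hkey
  have hfinal := hkey.mul_left (2 / π)
  convert hfinal using 2 with n
  case e'_3 => rfl
  rw [ell_doubleFactorial]
  have hpi : π ≠ 0 := Real.pi_ne_zero
  field_simp
end

section
/- Let a, b ∈ ℂ with 0 < Re(b) < 1, and let z ∈ ℂ with |z| < 1. Then Σ_{n≥0} ((a)_n (b)_n / (n!)²) zⁿ = (1/(Γ(b)Γ(1−b))) ∫_0^1 u^{b−1} (1−u)^{−b} (1−z·u)^{−a} du, where the powers u^{b−1}, (1−u)^{−b}, (1−zu)^{−a} are principal branches (the last is well defined since 1−zu has positive real part for u ∈ [0,1]). -/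
open Complex Filter MeasureTheory Set intervalIntegral
open scoped Topology

noncomputable def hgc (a : ℂ) (n : ℕ) : ℂ := (ascPochhammer ℂ n).eval a / n.factorial

lemma poch_succ_c (a : ℂ) (n : ℕ) :
    (ascPochhammer ℂ (n+1)).eval a = (ascPochhammer ℂ n).eval a * (a + n) := by
  simp [ascPochhammer_succ_right]

lemma poch_succ_r (x : ℝ) (n : ℕ) :
    (ascPochhammer ℝ (n+1)).eval x = (ascPochhammer ℝ n).eval x * (x + n) := by
  simp [ascPochhammer_succ_right]

lemma poch_norm_le (a : ℂ) (n : ℕ) :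
    ‖(ascPochhammer ℂ n).eval a‖ ≤ (ascPochhammer ℝ n).eval (‖a‖ + 1) := by
  induction n with
  | zero => simp
  | succ n ih =>
    rw [poch_succ_c, poch_succ_r]
    refine (norm_mul_le _ _).trans ?_
    have h1 : ‖a + (n:ℂ)‖ ≤ ‖a‖ + 1 + n := by
      refine (norm_add_le _ _).trans ?_
      simp only [norm_natCast]
      linarith
    have h2 : (0:ℝ) ≤ (ascPochhammer ℝ n).eval (‖a‖+1) :=
      (ascPochhammer_pos n _ (by positivity)).le
    exact mul_le_mul ih h1 (norm_nonneg _) h2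

lemma summable_poch_mul_pow (M r : ℝ) (hM : 0 < M) (hr0 : 0 < r) (hr1 : r < 1) :
    Summable (fun n : ℕ => (ascPochhammer ℝ (n+1)).eval M / n.factorial * r ^ n) := by
  have hpos : ∀ n : ℕ, 0 < (ascPochhammer ℝ (n+1)).eval M / n.factorial * r ^ n := by
    intro n
    have h1 := ascPochhammer_pos (n+1) M hM
    have h2 : (0:ℝ) < n.factorial := by positivity
    positivity
  apply summable_of_ratio_test_tendsto_lt_one hr1
  · exact Eventually.of_forall fun n => (hpos n).ne'
  · have key : ∀ n : ℕ, ‖(ascPochhammer ℝ (n+1+1)).eval M / (n+1).factorial * r ^ (n+1)‖ /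
        ‖(ascPochhammer ℝ (n+1)).eval M / n.factorial * r ^ n‖ = (M / (n+1) + 1) * r := by
      intro n
      rw [Real.norm_of_nonneg (hpos (n+1)).le, Real.norm_of_nonneg (hpos n).le]
      have h1 := (ascPochhammer_pos (n+1) M hM).ne'
      have h2 : ((n.factorial : ℝ)) ≠ 0 := by positivity
      have h3 : (r:ℝ) ^ n ≠ 0 := by positivity
      have h4 : ((n:ℝ) + 1) ≠ 0 := by positivity
      rw [poch_succ_r]
      rw [Nat.factorial_succ]
      push_cast
      field_simp
      ring
    have t0 : Tendsto (fun n : ℕ => M / ((n:ℝ) + 1)) atTop (𝓝 0) :=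
      Tendsto.div_atTop tendsto_const_nhds
        (tendsto_atTop_add_const_right _ 1 tendsto_natCast_atTop_atTop)
    have t1 : Tendsto (fun n : ℕ => (M / ((n:ℝ)+1) + 1) * r) atTop (𝓝 r) := by
      have := (t0.add (tendsto_const_nhds (x := (1:ℝ)))).mul_const r
      simpa using this
    exact t1.congr fun n => (key n).symm

lemma summable_poch_pow (M t : ℝ) (hM : 0 < M) (ht0 : 0 ≤ t) (ht1 : t < 1) :
    Summable (fun n : ℕ => (ascPochhammer ℝ n).eval M / n.factorial * t ^ n) := by
  rcases eq_or_lt_of_le ht0 with h0 | h0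
  · apply summable_of_ne_finset_zero (s := {0})
    intro n hn
    have : n ≠ 0 := by simpa using hn
    rw [← h0, zero_pow this, mul_zero]
  · have hs := (summable_poch_mul_pow M t hM h0 ht1).mul_left (1 / M)
    refine Summable.of_nonneg_of_le (fun n => ?_) (fun n => ?_) hs
    · have := (ascPochhammer_pos n M hM).le
      have h2 : (0:ℝ) ≤ n.factorial := by positivity
      positivity
    · have key : (ascPochhammer ℝ n).eval M ≤ (1/M) * (ascPochhammer ℝ (n+1)).eval M := by
        rw [poch_succ_r]
        have hp := (ascPochhammer_pos n M hM).le
        rw [one_div, ← mul_assoc, mul_comm M⁻¹, mul_assoc]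
        nth_rewrite 1 [← mul_one ((ascPochhammer ℝ n).eval M)]
        apply mul_le_mul_of_nonneg_left _ hp
        rw [le_inv_mul_iff₀ hM, mul_one]
        have : (0:ℝ) ≤ n := Nat.cast_nonneg n
        linarith
      have h2 : (0:ℝ) < n.factorial := by positivity
      calc (ascPochhammer ℝ n).eval M / n.factorial * t ^ n
          ≤ ((1/M) * (ascPochhammer ℝ (n+1)).eval M) / n.factorial * t ^ n := by
            gcongr
        _ = 1 / M * ((ascPochhammer ℝ (n+1)).eval M / n.factorial * t ^ n) := by ring

lemma summable_norm_hgc (a : ℂ) (t : ℝ) (ht0 : 0 ≤ t) (ht1 : t < 1) :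
    Summable (fun n : ℕ => ‖hgc a n‖ * t ^ n) := by
  refine Summable.of_nonneg_of_le (fun n => by positivity) (fun n => ?_)
    (summable_poch_pow (‖a‖ + 1) t (by positivity) ht0 ht1)
  have h1 : ‖hgc a n‖ ≤ (ascPochhammer ℝ n).eval (‖a‖+1) / n.factorial := by
    rw [hgc, norm_div]
    simp only [norm_natCast]
    gcongr
    exact poch_norm_le a n
  apply mul_le_mul_of_nonneg_right _ (by positivity)
  exact h1

lemma hgc_zero (a : ℂ) : hgc a 0 = 1 := by simp [hgc]

lemma hgc_rec (a : ℂ) (n : ℕ) : ((n:ℂ)+1) * hgc a (n+1) = (a + n) * hgc a n := by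
  rw [hgc, hgc, poch_succ_c, Nat.factorial_succ]
  have h1 : ((n.factorial : ℂ)) ≠ 0 := Nat.cast_ne_zero.mpr (Nat.factorial_ne_zero n)
  have h2 : ((n:ℂ)+1) ≠ 0 := Nat.cast_add_one_ne_zero n
  push_cast
  field_simp

lemma summable_hgc_mul (a w : ℂ) (hw : ‖w‖ < 1) : Summable (fun n => hgc a n * w ^ n) := by
  apply Summable.of_norm
  exact (summable_norm_hgc a ‖w‖ (norm_nonneg w) hw).congr
    (fun n => by rw [norm_mul, norm_pow])

lemma binomial_tsum (a : ℂ) {w : ℂ} (hw : ‖w‖ < 1) :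
    ∑' n : ℕ, hgc a n * w ^ n = (1 - w) ^ (-a) := by
  set M : ℝ := ‖a‖ + 1 with hM
  have hM0 : 0 < M := by positivity
  set r : ℝ := (‖w‖ + 1) / 2 with hrdef
  have hw0 := norm_nonneg w
  have hwr : ‖w‖ < r := by rw [hrdef]; linarith
  have hr0 : 0 < r := by rw [hrdef]; linarith
  have hr1 : r < 1 := by rw [hrdef]; linarith
  set t : Set ℂ := Metric.ball 0 r with htdef
  have hmem : ∀ y ∈ t, ‖y‖ < r := by
    intro y hy; simpa [htdef, Metric.mem_ball] using hy
  have h0t : (0:ℂ) ∈ t := Metric.mem_ball_self hr0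
  set u : ℕ → ℝ := fun n => match n with
    | 0 => 0
    | (m+1) => (ascPochhammer ℝ (m+1)).eval M / m.factorial * r ^ m with hudef
  have hu : Summable u := by
    rw [← summable_nat_add_iff 1]
    exact (summable_poch_mul_pow M r hM0 hr0 hr1).congr (fun n => rfl)
  set g' : ℕ → ℂ → ℂ := fun n y => (n:ℂ) * hgc a n * y ^ (n-1) with hg'def
  have hg : ∀ (n : ℕ) (y : ℂ), y ∈ t → HasDerivAt (fun z => hgc a n * z ^ n) (g' n y) y := by
    intro n y _
    have h := (hasDerivAt_pow n y).const_mul (hgc a n)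
    refine h.congr_deriv ?_
    simp only [hg'def]; ring
  have hbound : ∀ (n : ℕ) (y : ℂ), y ∈ t → ‖g' n y‖ ≤ u n := by
    intro n y hy
    match n with
    | 0 => simp [hg'def, hudef]
    | (m+1) =>
      have hyr := (hmem y hy).le
      have hc : ‖hgc a (m+1)‖ ≤ (ascPochhammer ℝ (m+1)).eval M / (m+1).factorial := by
        rw [hgc, norm_div, _root_.norm_natCast]
        gcongr
        exact poch_norm_le a (m+1)
      calc ‖g' (m+1) y‖ = ((m:ℝ)+1) * ‖hgc a (m+1)‖ * ‖y‖ ^ m := by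
            rw [hg'def]
            simp only [Nat.add_sub_cancel, norm_mul, norm_pow, _root_.norm_natCast]
            push_cast
            ring
        _ ≤ ((m:ℝ)+1) * ((ascPochhammer ℝ (m+1)).eval M / (m+1).factorial) * r ^ m := by
            have h1 : (0:ℝ) ≤ (m:ℝ)+1 := by positivity
            have h2 : (0:ℝ) ≤ ‖y‖ := norm_nonneg y
            have hp : (0:ℝ) ≤ (ascPochhammer ℝ (m+1)).eval M := (ascPochhammer_pos (m+1) M hM0).le
            have h4 : (0:ℝ) ≤ ((m+1).factorial : ℝ) := by positivity
            exact mul_le_mul (mul_le_mul_of_nonneg_left hc h1)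
              (pow_le_pow_left₀ h2 hyr m) (by positivity)
              (mul_nonneg h1 (div_nonneg hp h4))
        _ = (ascPochhammer ℝ (m+1)).eval M / m.factorial * r ^ m := by
            rw [Nat.factorial_succ]
            have h2 : ((m.factorial:ℝ)) ≠ 0 := by positivity
            have h3 : ((m:ℝ)+1) ≠ 0 := by positivity
            push_cast
            field_simp
        _ = u (m+1) := rfl
  have hsum0 : Summable (fun n => hgc a n * (0:ℂ) ^ n) := summable_hgc_mul a 0 (by simp)
  set S : ℂ → ℂ := fun x => ∑' n : ℕ, hgc a n * x ^ n with hSdef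
  have hS : ∀ y ∈ t, HasDerivAt S (∑' n : ℕ, g' n y) y := by
    intro y hy
    exact hasDerivAt_tsum_of_isPreconnected hu Metric.isOpen_ball
      (convex_ball (0:ℂ) r).isPreconnected hg hbound h0t hsum0 hy
  have hkey : ∀ y ∈ t, (1 - y) * (∑' n : ℕ, g' n y) = a * S y := by
    intro y hy
    have hy1 : ‖y‖ < 1 := (hmem y hy).trans hr1
    have hsy : Summable (fun n => hgc a n * y ^ n) := summable_hgc_mul a y hy1
    have hs' : Summable (fun n => g' n y) :=
      Summable.of_norm_bounded hu (fun n => hbound n y hy)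
    have hshift : Summable (fun n : ℕ => ((n:ℂ)+1) * hgc a (n+1) * y ^ n) := by
      have := (summable_nat_add_iff 1).mpr hs'
      exact this.congr (fun n => by rw [hg'def]; push_cast; norm_num)
    have hmul : Summable (fun n : ℕ => (n:ℂ) * hgc a n * y ^ n) := by
      refine (hs'.mul_left y).congr (fun n => ?_)
      match n with
      | 0 => simp [hg'def]
      | (m+1) => rw [hg'def]; simp only [Nat.add_sub_cancel]; push_cast; ring
    have e1 : ∑' n : ℕ, g' n y = ∑' n : ℕ, ((n:ℂ)+1) * hgc a (n+1) * y ^ n := by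
      rw [Summable.tsum_eq_zero_add hs']
      simp only [hg'def, Nat.cast_zero, zero_mul, zero_add]
      congr 1
      funext n
      push_cast
      norm_num
    have e2 : y * ∑' n : ℕ, g' n y = ∑' n : ℕ, (n:ℂ) * hgc a n * y ^ n := by
      rw [← tsum_mul_left]
      congr 1
      funext n
      match n with
      | 0 => simp [hg'def]
      | (m+1) => rw [hg'def]; simp only [Nat.add_sub_cancel]; push_cast; ring
    have expand : (1 - y) * (∑' n : ℕ, g' n y)
        = (∑' n : ℕ, ((n:ℂ)+1) * hgc a (n+1) * y ^ n) - ∑' n : ℕ, (n:ℂ) * hgc a n * y ^ n := by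
      rw [sub_mul, one_mul, e2]
      rw [e1]
    rw [expand, ← Summable.tsum_sub hshift hmul]
    rw [hSdef]
    simp only
    rw [← tsum_mul_left]
    congr 1
    funext n
    linear_combination (y ^ n) * hgc_rec a n
  have hder : ∀ y ∈ t, HasDerivAt (fun x => S x * (1-x) ^ a) 0 y := by
    intro y hy
    have hy1 : ‖y‖ < 1 := (hmem y hy).trans hr1
    have hre : 0 < (1 - y).re := by
      have h1 : |y.re| ≤ ‖y‖ := Complex.abs_re_le_norm y
      have : y.re < 1 := lt_of_le_of_lt (le_trans (le_abs_self _) h1) hy1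
      simp [Complex.sub_re]
      linarith
    have hne : (1:ℂ) - y ≠ 0 := fun h => by rw [h] at hre; simp at hre
    have h1 : HasDerivAt (fun x : ℂ => 1 - x) (-1) y := (hasDerivAt_id y).const_sub 1
    have h2 : HasDerivAt (fun x : ℂ => (1-x) ^ a) (a * (1-y) ^ (a-1) * (-1)) y :=
      h1.cpow_const (Or.inl hre)
    have h3 := (hS y hy).mul h2
    refine HasDerivAt.congr_deriv (f := fun x => S x * (1-x) ^ a) h3 ?_
    have hfac : (1-y) ^ a = (1-y) ^ (a-1) * (1-y) := by
      conv_lhs => rw [show a = (a-1)+1 by ring, cpow_add _ _ hne, cpow_one]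
    rw [hfac]
    linear_combination ((1-y) ^ (a-1)) * hkey y hy
  have hwt : w ∈ t := by simpa [htdef, Metric.mem_ball] using hwr
  have hconst : S w * (1-w) ^ a = S 0 * (1-0) ^ a := by
    have hcv : Convex ℝ t := convex_ball 0 r
    have hd : ∀ y ∈ t, HasFDerivWithinAt (fun x => S x * (1-x) ^ a) (0 : ℂ →L[ℝ] ℂ) t y := by
      intro y hy
      have h := (hder y hy).hasFDerivAt
      have hz : ContinuousLinearMap.toSpanSingleton ℂ (0:ℂ) = 0 := by
        ext x; simp
      rw [hz] at h
      exact (h.restrictScalars ℝ).hasFDerivWithinAt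
    have hb := hcv.norm_image_sub_le_of_norm_hasFDerivWithin_le (C := 0) hd
      (fun y hy => by simp) h0t hwt
    have : ‖S w * (1-w) ^ a - S 0 * (1-0) ^ a‖ ≤ 0 := by simpa using hb
    have h0 := le_antisymm this (norm_nonneg _)
    exact sub_eq_zero.mp (norm_eq_zero.mp h0)
  have hS0 : S 0 = 1 := by
    rw [hSdef]
    simp only
    rw [tsum_eq_single 0 (fun n hn => by rw [zero_pow hn, mul_zero])]
    simp [hgc_zero]
  rw [hS0, one_mul] at hconst
  have h1 : (1:ℂ) - 0 = 1 := by ring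
  rw [h1, one_cpow] at hconst
  have hy1 : ‖w‖ < 1 := hw
  have hre : 0 < (1 - w).re := by
    have h1 : |w.re| ≤ ‖w‖ := Complex.abs_re_le_norm w
    have : w.re < 1 := lt_of_le_of_lt (le_trans (le_abs_self _) h1) hy1
    simp [Complex.sub_re]
    linarith
  have hne : (1:ℂ) - w ≠ 0 := fun h => by rw [h] at hre; simp at hre
  have hXne : (1-w) ^ a ≠ 0 := by
    rw [Complex.cpow_def_of_ne_zero hne]
    exact Complex.exp_ne_zero _
  rw [Complex.cpow_neg]
  show S w = ((1-w) ^ a)⁻¹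
  field_simp
  linear_combination hconst



lemma Gamma_add_nat_poch (b : ℂ) (hb : 0 < b.re) (n : ℕ) :
    Complex.Gamma (b + n) = (ascPochhammer ℂ n).eval b * Complex.Gamma b := by
  induction n with
  | zero => simp
  | succ n ih =>
    have hne : b + n ≠ 0 := by
      intro h
      have : (b + (n:ℂ)).re = 0 := by rw [h]; simp
      simp only [Complex.add_re, Complex.natCast_re] at this
      have : (0:ℝ) ≤ n := Nat.cast_nonneg n
      linarith [Complex.add_re b n, Nat.cast_nonneg (α := ℝ) n]
    have h1 : b + ((n:ℕ)+1 : ℕ) = (b + n) + 1 := by push_cast; ring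
    rw [h1, Complex.Gamma_add_one _ hne, ih, poch_succ_c]
    ring

lemma beta_eval {b : ℂ} (hb0 : 0 < b.re) (hb1 : b.re < 1) (n : ℕ) :
    (∫ u in (0:ℝ)..1, (u:ℂ) ^ (b-1) * (1 - (u:ℂ)) ^ (-b) * (u:ℂ) ^ n)
      = (ascPochhammer ℂ n).eval b * Complex.Gamma b * Complex.Gamma (1-b) / n.factorial := by
  have hbn : 0 < (b + n).re := by
    simp only [Complex.add_re, Complex.natCast_re]
    have : (0:ℝ) ≤ n := Nat.cast_nonneg n
    linarith
  have h1b : 0 < (1 - b).re := by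
    simp only [Complex.sub_re, Complex.one_re]
    linarith
  have hGamma := Complex.Gamma_mul_Gamma_eq_betaIntegral hbn h1b
  have harg : b + n + (1 - b) = ((n:ℂ) + 1) := by ring
  rw [harg] at hGamma
  have hGn : Complex.Gamma ((n:ℂ)+1) = n.factorial := Complex.Gamma_nat_eq_factorial n
  have hbeta : Complex.betaIntegral (b + n) (1 - b)
      = ∫ u in (0:ℝ)..1, (u:ℂ) ^ (b-1) * (1 - (u:ℂ)) ^ (-b) * (u:ℂ) ^ n := by
    rw [Complex.betaIntegral]
    rw [intervalIntegral.integral_of_le zero_le_one, intervalIntegral.integral_of_le zero_le_one]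
    apply setIntegral_congr_fun measurableSet_Ioc
    intro u hu
    dsimp only
    have hu0 : (0:ℝ) < u := hu.1
    have hune : (u:ℂ) ≠ 0 := by exact_mod_cast hu0.ne'
    have e1 : b + n - 1 = (b - 1) + n := by ring
    have e2 : (1:ℂ) - b - 1 = -b := by ring
    rw [e1, e2, Complex.cpow_add _ _ hune, Complex.cpow_natCast]
    ring
  rw [hbeta] at hGamma
  rw [Gamma_add_nat_poch b hb0 n, hGn] at hGamma
  have hfac : ((n.factorial : ℂ)) ≠ 0 := Nat.cast_ne_zero.mpr (Nat.factorial_ne_zero n)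
  rw [eq_div_iff hfac]
  linear_combination -hGamma

/-- Euler's integral representation for `F(a,b,1;z)`: for `0 < Re b < 1` and `|z| < 1`,
`Σ_{n≥0} ((a)ₙ(b)ₙ/(n!)²) zⁿ
  = (1/(Γ(b)Γ(1−b))) ∫_0^1 u^{b−1} (1−u)^{−b} (1−zu)^{−a} du`,
all complex powers being principal branches. -/
theorem euler_integral_hypergeometric_c_one
    (a b : ℂ) (hb0 : 0 < b.re) (hb1 : b.re < 1) (z : ℂ) (hz : ‖z‖ < 1) :
    ∑' n : ℕ, (ascPochhammer ℂ n).eval a * (ascPochhammer ℂ n).eval b /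
        ((Nat.factorial n : ℂ)) ^ 2 * z ^ n =
      1 / (Complex.Gamma b * Complex.Gamma (1 - b)) *
        ∫ u in (0:ℝ)..1,
          (u : ℂ) ^ (b - 1) * (1 - (u : ℂ)) ^ (-b) * (1 - z * (u : ℂ)) ^ (-a) := by
  have hz' : ‖z‖ < 1 := hz
  have h1b : 0 < (1 - b).re := by
    simp only [Complex.sub_re, Complex.one_re]; linarith
  set F : ℕ → ℝ → ℂ := fun n u =>
    hgc a n * z ^ n * ((u:ℂ) ^ (b-1) * (1 - (u:ℂ)) ^ (-b) * (u:ℂ) ^ n) with hF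
  -- integrability of each piece
  have hgint : ∀ n : ℕ, IntegrableOn
      (fun u : ℝ => (u:ℂ) ^ (b-1) * (1 - (u:ℂ)) ^ (-b) * (u:ℂ) ^ n) (Ioc 0 1) volume := by
    intro n
    have hbn : 0 < (b + n).re := by
      simp only [Complex.add_re, Complex.natCast_re]
      have : (0:ℝ) ≤ n := Nat.cast_nonneg n
      linarith
    have h := (Complex.betaIntegral_convergent hbn h1b).1
    refine h.congr_fun ?_ measurableSet_Ioc
    intro u hu
    have hune : (u:ℂ) ≠ 0 := by exact_mod_cast hu.1.ne'
    have e1 : b + n - 1 = (b - 1) + n := by ring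
    have e2 : (1:ℂ) - b - 1 = -b := by ring
    dsimp only
    rw [e1, e2, Complex.cpow_add _ _ hune, Complex.cpow_natCast]
    ring
  have hFint : ∀ n : ℕ, IntegrableOn (F n) (Ioc (0:ℝ) 1) volume := by
    intro n
    exact (hgint n).const_mul (hgc a n * z ^ n)
  have hg0 : IntegrableOn (fun u : ℝ => (u:ℂ) ^ (b-1) * (1 - (u:ℂ)) ^ (-b)) (Ioc 0 1) volume := by
    refine (hgint 0).congr_fun ?_ measurableSet_Ioc
    intro u _; simp
  set B : ℝ := ∫ u in Ioc (0:ℝ) 1, ‖(u:ℂ) ^ (b-1) * (1 - (u:ℂ)) ^ (-b)‖ with hB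
  have hupow : ∀ u ∈ Ioc (0:ℝ) 1, ∀ n : ℕ, ‖(u:ℂ) ^ n‖ ≤ 1 := by
    intro u hu n
    rw [norm_pow, Complex.norm_real, Real.norm_eq_abs, abs_of_pos hu.1]
    exact pow_le_one₀ hu.1.le hu.2
  have hnormbound : ∀ n : ℕ, (∫ u in Ioc (0:ℝ) 1, ‖F n u‖) ≤ (‖hgc a n‖ * ‖z‖ ^ n) * B := by
    intro n
    rw [hB, ← MeasureTheory.integral_const_mul]
    refine setIntegral_mono_on ((hFint n).norm) ((hg0.norm).const_mul _) measurableSet_Ioc ?_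
    intro u hu
    rw [hF]
    dsimp only
    rw [norm_mul, norm_mul, norm_mul, norm_pow]
    calc ‖hgc a n‖ * ‖z‖ ^ n * (‖(u:ℂ) ^ (b-1) * (1-(u:ℂ)) ^ (-b)‖ * ‖(u:ℂ) ^ n‖)
        ≤ ‖hgc a n‖ * ‖z‖ ^ n * (‖(u:ℂ) ^ (b-1) * (1-(u:ℂ)) ^ (-b)‖ * 1) := by
          gcongr
          exact hupow u hu n
      _ = ‖hgc a n‖ * ‖z‖ ^ n * ‖(u:ℂ) ^ (b-1) * (1-(u:ℂ)) ^ (-b)‖ := by ring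
  have hsumnorm : Summable (fun n : ℕ => ∫ u in Ioc (0:ℝ) 1, ‖F n u‖) := by
    refine Summable.of_nonneg_of_le (fun n => integral_nonneg (fun u => norm_nonneg _))
      hnormbound (((summable_norm_hgc a ‖z‖ (norm_nonneg z) hz').mul_right B))
  have hswap := MeasureTheory.integral_tsum_of_summable_integral_norm
    (μ := volume.restrict (Ioc (0:ℝ) 1)) hFint hsumnorm
  have hpt : ∀ u ∈ Ioc (0:ℝ) 1,
      (u:ℂ) ^ (b-1) * (1 - (u:ℂ)) ^ (-b) * (1 - z * (u:ℂ)) ^ (-a) = ∑' n : ℕ, F n u := by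
    intro u hu
    have hzu : ‖z * (u:ℂ)‖ < 1 := by
      rw [norm_mul]
      calc ‖z‖ * ‖(u:ℂ)‖ ≤ ‖z‖ * 1 := by
            gcongr
            simpa using hupow u hu 1
        _ = ‖z‖ := mul_one _
        _ < 1 := hz'
    rw [← binomial_tsum a hzu, ← tsum_mul_left]
    apply tsum_congr
    intro n
    rw [hF]
    dsimp only
    rw [mul_pow]
    ring
  have hval : ∀ n : ℕ, (∫ u in Ioc (0:ℝ) 1, F n u)
      = hgc a n * z ^ n *
        ((ascPochhammer ℂ n).eval b * Complex.Gamma b * Complex.Gamma (1-b) / n.factorial) := by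
    intro n
    rw [hF]
    dsimp only
    rw [MeasureTheory.integral_const_mul, ← intervalIntegral.integral_of_le zero_le_one, beta_eval hb0 hb1 n]
  rw [intervalIntegral.integral_of_le zero_le_one,
    setIntegral_congr_fun measurableSet_Ioc hpt, ← hswap, tsum_congr hval, ← tsum_mul_left]
  apply tsum_congr
  intro n
  have hGb : Complex.Gamma b ≠ 0 := Complex.Gamma_ne_zero_of_re_pos hb0
  have hGb' : Complex.Gamma (1-b) ≠ 0 := Complex.Gamma_ne_zero_of_re_pos h1b
  have hfac : ((n.factorial : ℂ)) ≠ 0 := Nat.cast_ne_zero.mpr (Nat.factorial_ne_zero n)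
  rw [hgc]
  field_simp
end

section
/- Let a, b, c ∈ ℂ with Re(c) > Re(b) > 0, and let z ∈ ℂ with |z| < 1. Then Σ_{n≥0} ((a)_n (b)_n / ((c)_n · n!)) zⁿ = (Γ(c)/(Γ(b)Γ(c−b))) ∫_0^1 u^{b−1} (1−u)^{c−b−1} (1−z·u)^{−a} du, where the powers are principal branches (well defined since u, 1−u > 0 and 1−zu has positive real part for u ∈ [0,1]). -/
open Complex

open FormalMultilinearSeries MeasureTheory


lemma ascFactorial_le_factorial_mul_pow (m n : ℕ) :
    m.ascFactorial n ≤ n.factorial * (m + n) ^ m := by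
  rcases Nat.eq_zero_or_pos m with rfl | hm
  · cases n with
    | zero => simp
    | succ k => simp [Nat.zero_ascFactorial]
  · obtain ⟨m', rfl⟩ := Nat.exists_eq_add_of_le hm
    rw [Nat.add_comm 1 m', Nat.ascFactorial_eq_factorial_mul_choose]
    refine Nat.mul_le_mul_left _ ?_
    calc (m' + n).choose n = (m' + n).choose m' := Nat.choose_symm_of_eq_add (by omega)
      _ ≤ (m' + n) ^ m' := Nat.choose_le_pow _ _
      _ ≤ (m' + 1 + n) ^ m' := Nat.pow_le_pow_left (by omega) m'
      _ ≤ (m' + 1 + n) ^ (m' + 1) := Nat.pow_le_pow_right (by omega) (by omega)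

lemma norm_ascPochhammer_le (a : ℂ) (n : ℕ) :
    ‖(ascPochhammer ℂ n).eval a‖ ≤ (((Nat.ceil ‖a‖).ascFactorial n : ℕ) : ℝ) := by
  induction n with
  | zero => simp
  | succ n ih =>
    rw [ascPochhammer_succ_eval, Nat.ascFactorial_succ]
    push_cast
    refine le_trans (norm_mul_le _ _) ?_
    have h2 : ‖a + (n : ℂ)‖ ≤ (Nat.ceil ‖a‖ : ℝ) + n := by
      refine le_trans (norm_add_le _ _) ?_
      simp only [norm_natCast]
      have : ‖a‖ ≤ (Nat.ceil ‖a‖ : ℝ) := Nat.le_ceil _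
      linarith
    calc ‖(ascPochhammer ℂ n).eval a‖ * ‖a + (n:ℂ)‖
        ≤ ((Nat.ceil ‖a‖).ascFactorial n : ℝ) * ((Nat.ceil ‖a‖ : ℝ) + n) :=
          mul_le_mul ih h2 (norm_nonneg _) (by positivity)
      _ = _ := by ring

lemma summable_succ_pow_mul_geometric (m : ℕ) {r : ℝ} (hr : |r| < 1) :
    Summable (fun n : ℕ => ((n : ℝ) + 1) ^ m * r ^ n) := by
  have : ∀ n : ℕ, ((n : ℝ) + 1) ^ m * r ^ n
      = ∑ j ∈ Finset.range (m + 1), ((n:ℝ) ^ j * r ^ n * (m.choose j : ℝ)) := by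
    intro n
    rw [add_pow, Finset.sum_mul]
    refine Finset.sum_congr rfl fun j hj => by ring_nf
  rw [funext this]
  refine summable_sum fun j hj => ?_
  have := summable_pow_mul_geometric_of_norm_lt_one (R := ℝ) j (by rwa [Real.norm_eq_abs])
  exact this.mul_right _

/-- The coefficient bound `‖(a)ₙ/n!‖ ≤ ((m+1)(n+1))^m` with `m = ⌈‖a‖⌉`. -/
lemma norm_pochCoeff_le (a : ℂ) (n : ℕ) :
    ‖(ascPochhammer ℂ n).eval a / (n.factorial : ℂ)‖
      ≤ ((Nat.ceil ‖a‖ : ℝ) + 1) ^ (Nat.ceil ‖a‖) * ((n : ℝ) + 1) ^ (Nat.ceil ‖a‖) := by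
  set m := Nat.ceil ‖a‖
  have hfac : (0:ℝ) < (n.factorial : ℝ) := by positivity
  rw [norm_div, norm_natCast, div_le_iff₀ hfac]
  calc ‖(ascPochhammer ℂ n).eval a‖ ≤ ((m.ascFactorial n : ℕ) : ℝ) := norm_ascPochhammer_le a n
    _ ≤ ((n.factorial * (m + n) ^ m : ℕ) : ℝ) := by
        exact_mod_cast ascFactorial_le_factorial_mul_pow m n
    _ ≤ ((m:ℝ) + 1) ^ m * ((n : ℝ) + 1) ^ m * (n.factorial : ℝ) := by
        push_cast
        rw [← mul_pow]
        have h1 : ((m:ℝ) + n) ≤ ((m:ℝ)+1) * ((n:ℝ)+1) := by nlinarith [Nat.cast_nonneg (α := ℝ) m, Nat.cast_nonneg (α := ℝ) n]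
        have := pow_le_pow_left₀ (by positivity) h1 m
        nlinarith [pow_nonneg (by positivity : (0:ℝ) ≤ (m:ℝ)+n) m, (Nat.cast_pos (α := ℝ)).mpr n.factorial_pos]

lemma summable_norm_pochCoeff (a : ℂ) {r : ℝ} (hr0 : 0 ≤ r) (hr : r < 1) :
    Summable (fun n : ℕ => ‖(ascPochhammer ℂ n).eval a / (n.factorial : ℂ)‖ * r ^ n) := by
  set m := Nat.ceil ‖a‖
  refine Summable.of_nonneg_of_le (fun n => by positivity) (fun n => ?_)
    (((summable_succ_pow_mul_geometric m (by rwa [_root_.abs_of_nonneg hr0])).mul_left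
      (((m:ℝ) + 1) ^ m)))
  have := norm_pochCoeff_le a n
  have h2 : (0:ℝ) ≤ r ^ n := by positivity
  calc ‖(ascPochhammer ℂ n).eval a / (n.factorial : ℂ)‖ * r ^ n
      ≤ (((m:ℝ) + 1) ^ m * ((n : ℝ) + 1) ^ m) * r ^ n := by
        exact mul_le_mul_of_nonneg_right this h2
    _ = ((m:ℝ) + 1) ^ m * (((n : ℝ) + 1) ^ m * r ^ n) := by ring

lemma hasSum_binomial (a : ℂ) {w : ℂ} (hw : ‖w‖ < 1) :
    HasSum (fun n : ℕ => (ascPochhammer ℂ n).eval a / (n.factorial : ℂ) * w ^ n)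
      ((1 - w) ^ (-a)) := by
  set q : ℕ → ℂ := fun n => (ascPochhammer ℂ n).eval a / (n.factorial : ℂ) with hq
  set p : FormalMultilinearSeries ℂ ℂ ℂ := ofScalars ℂ q with hp
  -- radius at least one
  have hrad : 1 ≤ p.radius := by
    refine ENNReal.le_of_forall_nnreal_lt fun r hr => ?_
    refine p.le_radius_of_summable_norm ?_
    have hr1 : (r : ℝ) < 1 := by exact_mod_cast hr
    have := summable_norm_pochCoeff a r.coe_nonneg hr1
    simpa only [hp, ofScalars_norm] using this
  have hball : HasFPowerSeriesOnBall p.sum p 0 1 :=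
    (p.hasFPowerSeriesOnBall (lt_of_lt_of_le one_pos hrad)).mono one_pos hrad
  set f := p.sum with hf
  have hmem : ∀ {v : ℂ}, ‖v‖ < 1 → v ∈ Metric.eball (0:ℂ) 1 := by
    intro v hv
    rw [mem_emetric_ball_zero_iff]
    have h : ‖v‖₊ < 1 := by rw [← NNReal.coe_lt_coe]; simpa using hv
    rw [enorm_eq_nnnorm]
    exact_mod_cast h
  -- the sum formula
  have hfw : ∀ {v : ℂ}, ‖v‖ < 1 → HasSum (fun n => q n * v ^ n) (f v) := by
    intro v hv
    have := hball.hasSum (hmem hv)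
    rw [zero_add] at this
    simpa only [hp, ofScalars_apply_eq, smul_eq_mul] using this
  -- differentiability
  have hdiff : ∀ {v : ℂ}, ‖v‖ < 1 → HasDerivAt f (deriv f v) v := by
    intro v hv
    exact (hball.differentiableOn.differentiableAt
      (EMetric.isOpen_ball.mem_nhds (hmem hv))).hasDerivAt
  -- derivative sum formula
  have hS1 : ∀ {v : ℂ}, ‖v‖ < 1 →
      HasSum (fun n : ℕ => ((n:ℂ) + 1) * q (n+1) * v ^ (n+1)) (v * deriv f v) := by
    intro v hv
    have hd := hball.fderiv
    have hs := hd.hasSum (hmem hv)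
    rw [zero_add] at hs
    have hs2 := hs.mapL (ContinuousLinearMap.apply ℂ ℂ v)
    simp only [ContinuousLinearMap.apply_apply] at hs2
    have : ∀ n : ℕ, (p.derivSeries n fun _ => v) v = ((n:ℂ) + 1) * q (n+1) * v ^ (n+1) := by
      intro n
      rw [p.derivSeries_apply_diag]
      simp only [hp, ofScalars_apply_eq, smul_eq_mul, nsmul_eq_mul]
      push_cast
      ring
    rw [funext this] at hs2
    have : (fderiv ℂ f v) v = v * deriv f v := by
      rw [fderiv_eq_smul_deriv, smul_eq_mul]
    rwa [this] at hs2
  -- coefficient recurrence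
  have hcoeff : ∀ n : ℕ, ((n:ℂ) + 1) * q (n+1) = (a + n) * q n := by
    intro n
    simp only [hq, ascPochhammer_succ_eval, Nat.factorial_succ]
    push_cast
    have h1 : ((n:ℂ) + 1) ≠ 0 := Nat.cast_add_one_ne_zero n
    have h2 : ((n.factorial : ℂ)) ≠ 0 := Nat.cast_ne_zero.mpr n.factorial_ne_zero
    field_simp
  -- the ODE
  have hODE : ∀ {v : ℂ}, ‖v‖ < 1 → (1 - v) * deriv f v = a * f v := by
    intro v hv
    rcases eq_or_ne v 0 with rfl | hv0
    · have hderiv0 : deriv f 0 = q 1 := by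
        have := hball.hasFPowerSeriesAt.deriv
        rw [this]
        simp [hp, ofScalars]
      have h0 : HasSum (fun n => q n * (0:ℂ) ^ n) (q 0) := by
        simpa using hasSum_single (f := fun n => q n * (0:ℂ) ^ n) 0
          (fun n hn => by simp [zero_pow hn])
      have hf0 : f 0 = q 0 := (hfw (by simp : ‖(0:ℂ)‖ < 1)).unique h0
      have hq1 : q 1 = a := by simp [hq, ascPochhammer_one]
      have hq0 : q 0 = 1 := by simp [hq]
      rw [hderiv0, hf0, hq1, hq0]
      ring
    · -- telescoping argument
      set d : ℕ → ℂ := fun n => (n:ℂ) * q n * v ^ (n+1) with hd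
      have S1 := hS1 hv
      have S1w := S1.mul_left v
      have S2 := (hfw hv).mul_left (a * v)
      have h3 := (S1.sub S1w).sub S2
      have hterm : ∀ n : ℕ, (((n:ℂ)+1) * q (n+1) * v ^ (n+1)
          - v * (((n:ℂ)+1) * q (n+1) * v ^ (n+1))) - a * v * (q n * v ^ n)
          = d n - d (n+1) := by
        intro n
        have h1 := hcoeff n
        simp only [hd]
        push_cast
        calc (((n:ℂ)+1) * q (n+1) * v ^ (n+1) - v * (((n:ℂ)+1) * q (n+1) * v ^ (n+1)))
              - a * v * (q n * v ^ n)
            = ((a + n) * q n * v ^ (n+1) - v * ((a + n) * q n * v ^ (n+1)))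
              - a * v * (q n * v ^ n) := by rw [h1]
          _ = (n:ℂ) * q n * v ^ (n+1) - (a + n) * q n * v ^ (n+2) := by ring
          _ = (n:ℂ) * q n * v ^ (n+1) - ((n:ℂ)+1) * q (n+1) * v ^ (n+2) := by rw [h1]
          _ = _ := by push_cast; ring
      rw [funext hterm] at h3
      -- partial sums of d n - d (n+1) tend to - d N → 0
      have hdlim : Filter.Tendsto d Filter.atTop (nhds 0) := by
        have h0 : Filter.Tendsto (fun n : ℕ => ((n:ℂ)+1) * q (n+1) * v ^ (n+1))
            Filter.atTop (nhds 0) := S1.summable.tendsto_atTop_zero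
        have := (h0.mul_const v)
        rw [zero_mul] at this
        have heq : ∀ n : ℕ, ((n:ℂ)+1) * q (n+1) * v ^ (n+1) * v = d (n+1) := by
          intro n; simp only [hd]; push_cast; ring
        rw [funext heq] at this
        exact (Filter.tendsto_add_atTop_iff_nat 1).mp this
      have hpartial : Filter.Tendsto (fun N => ∑ n ∈ Finset.range N, (d n - d (n+1)))
          Filter.atTop (nhds 0) := by
        have : ∀ N, ∑ n ∈ Finset.range N, (d n - d (n+1)) = d 0 - d N :=
          fun N => Finset.sum_range_sub' d N
        rw [funext this]
        have hd0 : d 0 = 0 := by simp [hd]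
        rw [hd0]
        simpa using hdlim.neg
      have hzero : v * deriv f v - v * (v * deriv f v) - a * v * f v = 0 :=
        tendsto_nhds_unique h3.tendsto_sum_nat hpartial
      have hv2 : v * ((1 - v) * deriv f v - a * f v) = 0 := by linear_combination hzero
      rcases mul_eq_zero.mp hv2 with h4 | h4
      · exact absurd h4 hv0
      · rw [sub_eq_zero] at h4
        exact h4
  -- slit plane facts
  have hslit : ∀ {v : ℂ}, ‖v‖ < 1 → (1 - v) ∈ Complex.slitPlane := by
    intro v hv
    rw [mem_slitPlane_iff]
    left
    have h1 : |v.re| ≤ ‖v‖ := Complex.abs_re_le_norm v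
    simp only [sub_re, one_re]
    have := abs_le.mp h1
    linarith [this.2]
  have hne : ∀ {v : ℂ}, ‖v‖ < 1 → (1 - v) ≠ 0 := fun hv => slitPlane_ne_zero (hslit hv)
  -- g has zero derivative
  set g : ℂ → ℂ := fun v => (1 - v) ^ a * f v with hg
  have hgderiv : ∀ {v : ℂ}, ‖v‖ < 1 → HasDerivAt g 0 v := by
    intro v hv
    have h1 : HasDerivAt (fun w : ℂ => 1 - w) (-1) v := (hasDerivAt_id v).const_sub 1
    have h2 := (h1.cpow_const (c := a) (hslit hv)).mul (hdiff hv)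
    have hO := hODE hv
    have hsplit : (1 - v) ^ a = (1 - v) ^ (a - 1) * (1 - v) := by
      conv_lhs => rw [show a = a - 1 + 1 by ring]
      rw [cpow_add _ _ (hne hv), cpow_one]
    refine h2.congr_deriv (Eq.symm ?_)
    rw [hsplit]
    linear_combination (-(1 - v) ^ (a - 1)) * hO
  -- g is constant on the ball
  have hconst : ∀ {v : ℂ}, ‖v‖ < 1 → g v = g 0 := by
    intro v hv
    refine (convex_ball (0:ℂ) 1).is_const_of_fderivWithin_eq_zero (𝕜 := ℂ)
      (f := g) ?_ ?_ (by simpa [mem_ball_zero_iff] using hv) (by simp)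
    · intro w' hw'
      exact ((hgderiv (mem_ball_zero_iff.mp hw')).differentiableAt).differentiableWithinAt
    · intro w' hw'
      rw [fderivWithin_of_isOpen Metric.isOpen_ball hw',
        (hgderiv (mem_ball_zero_iff.mp hw')).hasFDerivAt.fderiv]
      ext x
      simp

  -- value at zero
  have hf0 : f 0 = 1 := by
    have h0 : HasSum (fun n => q n * (0:ℂ) ^ n) (q 0) := by
      simpa using hasSum_single (f := fun n => q n * (0:ℂ) ^ n) 0
        (fun n hn => by simp [zero_pow hn])
    have := (hfw (by simp : ‖(0:ℂ)‖ < 1)).unique h0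
    rw [this]
    simp [hq]
  have hg0 : g 0 = 1 := by
    simp only [hg, sub_zero, one_cpow, one_mul, hf0]
  have hkey : (1 - w) ^ a * f w = 1 := by
    have := hconst hw
    rw [hg0] at this
    exact this
  have hfeq : f w = (1 - w) ^ (-a) := by
    rw [cpow_neg]
    exact eq_inv_of_mul_eq_one_left (by linear_combination hkey)
  exact hfeq ▸ hfw hw

lemma ascPochhammer_eval_ne_zero_of_re_pos {s : ℂ} (hs : 0 < s.re) (n : ℕ) :
    (ascPochhammer ℂ n).eval s ≠ 0 := by
  induction n with
  | zero => simp
  | succ n ih =>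
    rw [ascPochhammer_succ_eval]
    refine mul_ne_zero ih ?_
    intro h
    have : (s + n).re = 0 := by rw [h]; simp
    simp only [add_re, natCast_re] at this
    have : (0:ℝ) ≤ (n:ℝ) := Nat.cast_nonneg n
    linarith

lemma Gamma_add_nat {s : ℂ} (hs : 0 < s.re) (n : ℕ) :
    Complex.Gamma (s + n) = (ascPochhammer ℂ n).eval s * Complex.Gamma s := by
  induction n with
  | zero => simp
  | succ n ih =>
    have h1 : s + (n + 1 : ℕ) = (s + n) + 1 := by push_cast; ring
    have h2 : s + (n:ℂ) ≠ 0 := by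
      intro h
      have : (s + n).re = 0 := by rw [h]; simp
      simp only [add_re, natCast_re] at this
      have : (0:ℝ) ≤ (n:ℝ) := Nat.cast_nonneg n
      linarith
    rw [h1, Complex.Gamma_add_one _ h2, ih, ascPochhammer_succ_eval]
    ring

/-- **Euler's integral representation** of the Gauss hypergeometric function: for
`Re c > Re b > 0` and `|z| < 1`,
`Σ_{n≥0} ((a)ₙ(b)ₙ/((c)ₙ n!)) zⁿ
  = (Γ(c)/(Γ(b)Γ(c−b))) ∫_0^1 u^{b−1} (1−u)^{c−b−1} (1−zu)^{−a} du`,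
all complex powers being principal branches. -/
theorem euler_integral_hypergeometric
    (a b c : ℂ) (hb : 0 < b.re) (hcb : b.re < c.re) (z : ℂ) (hz : ‖z‖ < 1) :
    ∑' n : ℕ, (ascPochhammer ℂ n).eval a * (ascPochhammer ℂ n).eval b /
        ((ascPochhammer ℂ n).eval c * (Nat.factorial n : ℂ)) * z ^ n =
      Complex.Gamma c / (Complex.Gamma b * Complex.Gamma (c - b)) *
        ∫ u in (0:ℝ)..1,
          (u : ℂ) ^ (b - 1) * (1 - (u : ℂ)) ^ (c - b - 1) * (1 - z * (u : ℂ)) ^ (-a) := by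
  have hc : 0 < c.re := lt_trans hb hcb
  have hcb' : 0 < (c - b).re := by simp only [sub_re]; linarith
  have hz' : ‖z‖ < 1 := hz
  set q : ℕ → ℂ := fun n => (ascPochhammer ℂ n).eval a / (n.factorial : ℂ) with hq
  set F : ℕ → ℝ → ℂ := fun n u =>
    q n * z ^ n * ((u:ℂ) ^ (b + n - 1) * (1 - (u:ℂ)) ^ (c - b - 1)) with hF
  -- pointwise expansion on Ioc 0 1
  have hpt : ∀ u ∈ Set.Ioc (0:ℝ) 1,
      (u : ℂ) ^ (b - 1) * (1 - (u : ℂ)) ^ (c - b - 1) * (1 - z * (u : ℂ)) ^ (-a)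
        = ∑' n, F n u := by
    intro u hu
    obtain ⟨hu0, hu1⟩ := hu
    have hzu : ‖z * (u:ℂ)‖ < 1 := by
      rw [norm_mul]
      have h1 : ‖(u:ℂ)‖ = u := by
        rw [Complex.norm_real, Real.norm_of_nonneg hu0.le]
      rw [h1]
      calc ‖z‖ * u ≤ ‖z‖ * 1 := by
            exact mul_le_mul_of_nonneg_left hu1 (norm_nonneg z)
        _ = ‖z‖ := mul_one _
        _ < 1 := hz'
    have hs := (hasSum_binomial a hzu).mul_left
      ((u:ℂ) ^ (b - 1) * (1 - (u:ℂ)) ^ (c - b - 1))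
    have hterm : ∀ n : ℕ,
        (u:ℂ) ^ (b - 1) * (1 - (u:ℂ)) ^ (c - b - 1) * (q n * (z * u) ^ n) = F n u := by
      intro n
      have hu0' : (u:ℂ) ≠ 0 := by exact_mod_cast hu0.ne'
      have : (u:ℂ) ^ (b + n - 1) = (u:ℂ) ^ (b - 1) * (u:ℂ) ^ (n:ℕ) := by
        rw [← cpow_natCast, ← cpow_add _ _ hu0']
        congr 1
        ring
      rw [hF]
      simp only []
      rw [this, mul_pow]
      ring
    rw [funext hterm] at hs
    exact hs.tsum_eq.symm
  -- integrability of each term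
  have hbn : ∀ n : ℕ, 0 < (b + (n:ℂ)).re := by
    intro n
    simp only [add_re, natCast_re]
    have : (0:ℝ) ≤ (n:ℝ) := Nat.cast_nonneg n
    linarith
  have hcn : ∀ n : ℕ, 0 < (c + (n:ℂ)).re := by
    intro n
    simp only [add_re, natCast_re]
    have : (0:ℝ) ≤ (n:ℝ) := Nat.cast_nonneg n
    linarith
  have hbeta : ∀ n : ℕ, IntegrableOn
      (fun u : ℝ => (u:ℂ) ^ (b + n - 1) * (1 - (u:ℂ)) ^ (c - b - 1)) (Set.Ioc (0:ℝ) 1) volume := by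
    intro n
    have := Complex.betaIntegral_convergent (hbn n) hcb'
    rwa [intervalIntegrable_iff_integrableOn_Ioc_of_le zero_le_one] at this
  have hint : ∀ n : ℕ, IntegrableOn (F n) (Set.Ioc (0:ℝ) 1) volume := by
    intro n
    exact (hbeta n).const_mul (q n * z ^ n)
  -- dominating function
  have hbeta0 : IntegrableOn
      (fun u : ℝ => (u:ℂ) ^ (b - 1) * (1 - (u:ℂ)) ^ (c - b - 1)) (Set.Ioc (0:ℝ) 1) volume := by
    have := Complex.betaIntegral_convergent hb hcb'
    rwa [intervalIntegrable_iff_integrableOn_Ioc_of_le zero_le_one] at this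
  set G : ℝ → ℝ := fun u => ‖(u:ℂ) ^ (b - 1) * (1 - (u:ℂ)) ^ (c - b - 1)‖ with hG
  have hGint : IntegrableOn G (Set.Ioc (0:ℝ) 1) volume := hbeta0.norm
  set B : ℝ := ∫ u in Set.Ioc (0:ℝ) 1, G u with hB
  have hbound : ∀ n : ℕ, ∀ u ∈ Set.Ioc (0:ℝ) 1,
      ‖F n u‖ ≤ (‖q n‖ * ‖z‖ ^ n) * G u := by
    intro n u hu
    obtain ⟨hu0, hu1⟩ := hu
    rw [hF, hG]
    simp only [norm_mul, norm_pow]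
    have h1 : ‖(u:ℂ) ^ (b + n - 1)‖ ≤ ‖(u:ℂ) ^ (b - 1)‖ := by
      rw [Complex.norm_cpow_eq_rpow_re_of_pos hu0, Complex.norm_cpow_eq_rpow_re_of_pos hu0]
      refine Real.rpow_le_rpow_of_exponent_ge hu0 hu1 ?_
      simp only [sub_re, add_re, one_re, natCast_re]
      have : (0:ℝ) ≤ (n:ℝ) := Nat.cast_nonneg n
      linarith
    gcongr
  -- summability of integrals of norms
  have hIn : ∀ n : ℕ, ∫ u in Set.Ioc (0:ℝ) 1, ‖F n u‖ ≤ (‖q n‖ * ‖z‖ ^ n) * B := by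
    intro n
    rw [hB, ← MeasureTheory.integral_const_mul]
    refine MeasureTheory.setIntegral_mono_on (hint n).norm (hGint.const_mul _)
      measurableSet_Ioc ?_
    exact hbound n
  have hsumI : Summable (fun n : ℕ => ∫ u in Set.Ioc (0:ℝ) 1, ‖F n u‖) := by
    refine Summable.of_nonneg_of_le
      (fun n => MeasureTheory.integral_nonneg (fun u => norm_nonneg _)) hIn ?_
    have := (summable_norm_pochCoeff a (norm_nonneg z) hz').mul_right B
    exact this
  -- the exchange of sum and integral
  have hswap : ∫ u in Set.Ioc (0:ℝ) 1, (∑' n, F n u) =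
      ∑' n, ∫ u in Set.Ioc (0:ℝ) 1, F n u :=
    (MeasureTheory.integral_tsum_of_summable_integral_norm hint hsumI).symm
  -- evaluating each integral
  have hInt_eq : ∀ n : ℕ, ∫ u in Set.Ioc (0:ℝ) 1, F n u
      = q n * z ^ n * Complex.betaIntegral (b + n) (c - b) := by
    intro n
    rw [← intervalIntegral.integral_of_le zero_le_one]
    rw [Complex.betaIntegral, ← intervalIntegral.integral_const_mul]
  have hGamma_cn : ∀ n : ℕ, Complex.Gamma (c + n) ≠ 0 :=
    fun n => Complex.Gamma_ne_zero_of_re_pos (hcn n)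
  have hbeta_eq : ∀ n : ℕ, Complex.betaIntegral (b + n) (c - b)
      = Complex.Gamma (b + n) * Complex.Gamma (c - b) / Complex.Gamma (c + n) := by
    intro n
    have h := Complex.Gamma_mul_Gamma_eq_betaIntegral (hbn n) hcb'
    have h2 : b + (n:ℂ) + (c - b) = c + n := by ring
    rw [h2] at h
    rw [eq_div_iff (hGamma_cn n), h]
    ring
  -- final computation
  rw [intervalIntegral.integral_of_le zero_le_one,
    MeasureTheory.setIntegral_congr_fun measurableSet_Ioc hpt, hswap, ← tsum_mul_left]
  refine tsum_congr fun n => ?_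
  rw [hInt_eq n, hbeta_eq n, Gamma_add_nat hb n, Gamma_add_nat hc n]
  have hΓb : Complex.Gamma b ≠ 0 := Complex.Gamma_ne_zero_of_re_pos hb
  have hΓcb : Complex.Gamma (c - b) ≠ 0 := Complex.Gamma_ne_zero_of_re_pos hcb'
  have hΓc : Complex.Gamma c ≠ 0 := Complex.Gamma_ne_zero_of_re_pos hc
  have hPc : (ascPochhammer ℂ n).eval c ≠ 0 := ascPochhammer_eval_ne_zero_of_re_pos hc n
  have hfac : ((n.factorial : ℂ)) ≠ 0 := Nat.cast_ne_zero.mpr n.factorial_ne_zero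
  rw [hq]
  field_simp
end

section
/- Let a, b ∈ ℂ with Re(b) > Re(a) > 0, let z ∈ ℂ, and let t : ℕ → ℂ be such that Σ_{n≥0} |t_n| |z|ⁿ < ∞. Let f : ℂ → ℂ satisfy f(w) = Σ_{n≥0} t_n wⁿ for every w with |w| ≤ |z|. Then Σ_{n≥0} ((a)_n / (b)_n) t_n zⁿ = (Γ(b)/(Γ(a)Γ(b−a))) ∫_0^1 u^{a−1} (1−u)^{b−a−1} f(z·u) du, where the powers u^{a−1} and (1−u)^{b−a−1} are principal branches. -/
open Complex MeasureTheory

private lemma gamma_add_nat' (a : ℂ) (ha : 0 < a.re) (n : ℕ) :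
    Complex.Gamma (a + n) = (ascPochhammer ℂ n).eval a * Complex.Gamma a := by
  induction n with
  | zero => simp
  | succ n ih =>
    have h1 : a + ((n + 1 : ℕ) : ℂ) = (a + n) + 1 := by push_cast; ring
    have h2 : (a + (n : ℂ)) ≠ 0 := by
      intro h
      have := congrArg Complex.re h
      simp only [Complex.add_re, Complex.natCast_re, Complex.zero_re] at this
      have hn : (0:ℝ) ≤ (n:ℝ) := Nat.cast_nonneg n
      linarith
    rw [h1, Complex.Gamma_add_one _ h2, ih, ascPochhammer_succ_eval]
    ring



/-- The Beta-kernel identity underlying Euler-type integral formulas for generalized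
hypergeometric series: for `Re b > Re a > 0`, if `f(w) = Σ tₙ wⁿ` for `|w| ≤ |z|` with
`Σ |tₙ||z|ⁿ < ∞`, then
`Σ_{n≥0} ((a)ₙ/(b)ₙ) tₙ zⁿ = (Γ(b)/(Γ(a)Γ(b−a))) ∫_0^1 u^{a−1} (1−u)^{b−a−1} f(zu) du`. -/
theorem beta_kernel_euler_integral
    (a b : ℂ) (ha : 0 < a.re) (hab : a.re < b.re) (z : ℂ) (t : ℕ → ℂ)
    (ht : Summable fun n : ℕ => ‖t n‖ * ‖z‖ ^ n)
    (f : ℂ → ℂ)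
    (hf : ∀ w : ℂ, ‖w‖ ≤ ‖z‖ →
      HasSum (fun n : ℕ => t n * w ^ n) (f w)) :
    ∑' n : ℕ, (ascPochhammer ℂ n).eval a / (ascPochhammer ℂ n).eval b * t n * z ^ n =
      Complex.Gamma b / (Complex.Gamma a * Complex.Gamma (b - a)) *
        ∫ u in (0:ℝ)..1,
          (u : ℂ) ^ (a - 1) * (1 - (u : ℂ)) ^ (b - a - 1) * f (z * (u : ℂ)) := by
  have hc : 0 < (b - a).re := by simp [Complex.sub_re]; linarith
  have hb : 0 < b.re := lt_trans ha hab
  have han : ∀ n : ℕ, 0 < (a + n).re := by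
    intro n
    simp only [Complex.add_re, Complex.natCast_re]
    positivity
  have hbn : ∀ n : ℕ, 0 < (b + n).re := by
    intro n
    simp only [Complex.add_re, Complex.natCast_re]
    positivity
  -- the summands as functions of u
  set F : ℕ → ℝ → ℂ := fun n u =>
    t n * z ^ n * ((u : ℂ) ^ (a + n - 1) * (1 - (u : ℂ)) ^ (b - a - 1)) with hF
  have hFint : ∀ n, IntegrableOn (F n) (Set.Ioc (0:ℝ) 1) := by
    intro n
    exact ((Complex.betaIntegral_convergent (han n) hc).1).const_mul _
  -- base kernel integrable
  have hKint : IntegrableOn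
      (fun u : ℝ => (u : ℂ) ^ (a - 1) * (1 - (u : ℂ)) ^ (b - a - 1))
      (Set.Ioc (0:ℝ) 1) := (Complex.betaIntegral_convergent ha hc).1
  set C : ℝ := ∫ u in Set.Ioc (0:ℝ) 1, ‖(u : ℂ) ^ (a - 1) * (1 - (u : ℂ)) ^ (b - a - 1)‖
  have hbound : ∀ n, (∫ u in Set.Ioc (0:ℝ) 1, ‖F n u‖)
      ≤ ‖t n‖ * ‖z‖ ^ n * C := by
    intro n
    have hmono : ∀ u ∈ Set.Ioc (0:ℝ) 1,
        ‖F n u‖ ≤ ‖t n‖ * ‖z‖ ^ n *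
          ‖(u : ℂ) ^ (a - 1) * (1 - (u : ℂ)) ^ (b - a - 1)‖ := by
      intro u hu
      obtain ⟨hu0, hu1⟩ := hu
      have h1 : ‖(u : ℂ) ^ (a + n - 1)‖ ≤ ‖(u : ℂ) ^ (a - 1)‖ := by
        rw [Complex.norm_cpow_eq_rpow_re_of_pos hu0, Complex.norm_cpow_eq_rpow_re_of_pos hu0]
        apply Real.rpow_le_rpow_of_exponent_ge hu0 hu1
        simp only [Complex.sub_re, Complex.add_re, Complex.natCast_re, Complex.one_re]
        have : (0:ℝ) ≤ (n:ℝ) := Nat.cast_nonneg n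
        linarith
      calc ‖F n u‖ = ‖t n‖ * ‖z‖ ^ n *
              (‖(u : ℂ) ^ (a + n - 1)‖ * ‖(1 - (u : ℂ)) ^ (b - a - 1)‖) := by
            simp [hF, map_mul, map_pow, mul_assoc]
        _ ≤ ‖t n‖ * ‖z‖ ^ n *
              (‖(u : ℂ) ^ (a - 1)‖ * ‖(1 - (u : ℂ)) ^ (b - a - 1)‖) := by
            gcongr
        _ = ‖t n‖ * ‖z‖ ^ n *
              ‖(u : ℂ) ^ (a - 1) * (1 - (u : ℂ)) ^ (b - a - 1)‖ := by
            rw [norm_mul]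
    calc (∫ u in Set.Ioc (0:ℝ) 1, ‖F n u‖)
        ≤ ∫ u in Set.Ioc (0:ℝ) 1, ‖t n‖ * ‖z‖ ^ n *
            ‖(u : ℂ) ^ (a - 1) * (1 - (u : ℂ)) ^ (b - a - 1)‖ := by
          apply setIntegral_mono_on ((hFint n).norm) (hKint.norm.const_mul _)
            measurableSet_Ioc hmono
      _ = ‖t n‖ * ‖z‖ ^ n * C := by
          rw [integral_const_mul]
  have hsum : Summable fun n => ∫ u in Set.Ioc (0:ℝ) 1, ‖F n u‖ := by
    apply Summable.of_nonneg_of_le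
      (fun n => integral_nonneg fun u => norm_nonneg _) hbound
    simpa [mul_assoc] using ht.mul_right C
  -- pointwise identity on Ioc 0 1
  have heq : ∀ u ∈ Set.Ioc (0:ℝ) 1,
      (u : ℂ) ^ (a - 1) * (1 - (u : ℂ)) ^ (b - a - 1) * f (z * u) = ∑' n, F n u := by
    intro u hu
    obtain ⟨hu0, hu1⟩ := hu
    have hzu : ‖z * u‖ ≤ ‖z‖ := by
      rw [norm_mul, Complex.norm_real, Real.norm_eq_abs, abs_of_pos hu0]
      exact mul_le_of_le_one_right (norm_nonneg z) hu1
    have hs := hf (z * u) hzu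
    have := (hs.mul_left ((u : ℂ) ^ (a - 1) * (1 - (u : ℂ)) ^ (b - a - 1))).tsum_eq.symm
    rw [this]
    refine tsum_congr fun n => ?_
    have hune : (u : ℂ) ≠ 0 := Complex.ofReal_ne_zero.mpr hu0.ne'
    have hcp : (u : ℂ) ^ (a + n - 1) = (u : ℂ) ^ (a - 1) * (u : ℂ) ^ n := by
      rw [← Complex.cpow_natCast, ← Complex.cpow_add _ _ hune]
      ring_nf
    simp only [hF]
    rw [hcp, mul_pow]
    ring
  have h01 : (0:ℝ) ≤ 1 := zero_le_one
  have key : (∫ u in (0:ℝ)..1,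
        (u : ℂ) ^ (a - 1) * (1 - (u : ℂ)) ^ (b - a - 1) * f (z * u))
      = ∑' n : ℕ, t n * z ^ n * Complex.betaIntegral (a + n) (b - a) := by
    rw [intervalIntegral.integral_of_le h01]
    rw [setIntegral_congr_fun measurableSet_Ioc heq]
    rw [← MeasureTheory.integral_tsum_of_summable_integral_norm hFint hsum]
    refine tsum_congr fun n => ?_
    rw [hF]
    simp only
    rw [integral_const_mul, Complex.betaIntegral, intervalIntegral.integral_of_le h01]
  rw [key, ← tsum_mul_left]
  refine tsum_congr fun n => ?_
  have hbeta : Complex.Gamma (a + n) * Complex.Gamma (b - a)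
      = Complex.Gamma (b + n) * Complex.betaIntegral (a + n) (b - a) := by
    have := Complex.Gamma_mul_Gamma_eq_betaIntegral (han n) hc
    rwa [show a + n + (b - a) = b + n by ring] at this
  have hGa := Complex.Gamma_ne_zero_of_re_pos ha
  have hGb := Complex.Gamma_ne_zero_of_re_pos hb
  have hGc := Complex.Gamma_ne_zero_of_re_pos hc
  have hGbn := Complex.Gamma_ne_zero_of_re_pos (hbn n)
  have h1 := gamma_add_nat' a ha n
  have h2 := gamma_add_nat' b hb n
  have hPb : (ascPochhammer ℂ n).eval b ≠ 0 := by
    intro h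
    rw [h, zero_mul] at h2
    exact hGbn h2
  have hbval : Complex.betaIntegral (a + n) (b - a)
      = (ascPochhammer ℂ n).eval a * Complex.Gamma a * Complex.Gamma (b - a) /
        ((ascPochhammer ℂ n).eval b * Complex.Gamma b) := by
    rw [h1, h2] at hbeta
    field_simp
    linear_combination -hbeta
  rw [hbval]
  field_simp
end
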